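/- arXiv:1907.00313 — 2 statements merged into one kernel-verified Lean document; each statement's English description precedes it below -/
import Mathlib

section
/- For the stochastic-rate-constrained UCB algorithm there exists an absolute constant C > 0 (independent of K, T, v, and the reward distributions) such that the regret satisfies the worst-case bound Reg_T ≤ C·( √(T·K·ln T) + K·ln T ). -/
set_option linter.unusedSectionVars false
set_option maxHeartbeats 1000000


open MeasureTheory ProbabilityTheory Finset

namespace FairBandit

variable {Ω : Type} [MeasurableSpace Ω]

/-- Number of pulls of arm `i` among rounds `1, …, t`. -/
def pullCount {K : ℕ} (arm : ℕ → Ω → Fin K) (i : Fin K) (t : ℕ) (ω : Ω) : ℕ :=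
  ((Finset.Icc 1 t).filter (fun s => arm s ω = i)).card

/-- Empirical mean of arm `i` at round `t`:  average of the first `n_{t-1}(i)`
samples `X i 0, X i 1, …` of arm `i` (the sample `X i k` is observed at the
`(k+1)`-st pull of arm `i`). -/
noncomputable def empMean {K : ℕ} (X : Fin K → ℕ → Ω → ℝ) (arm : ℕ → Ω → Fin K)
    (i : Fin K) (t : ℕ) (ω : Ω) : ℝ :=
  (∑ k ∈ Finset.range (pullCount arm i (t - 1) ω), X i k ω) / (pullCount arm i (t - 1) ω)

/-- Upper confidence bound of arm `i` at round `t`. -/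
noncomputable def ucb {K : ℕ} (T : ℕ) (X : Fin K → ℕ → Ω → ℝ) (arm : ℕ → Ω → Fin K)
    (i : Fin K) (t : ℕ) (ω : Ω) : ℝ :=
  empMean X arm i t ω + 2 * Real.sqrt (Real.log T / (pullCount arm i (t - 1) ω))

/-- Index type for the joint family consisting of all samples of all arms
together with the randomization seeds of rounds `K+1, K+2, …`. -/
def jointβ (K : ℕ) : (Fin K × ℕ) ⊕ ℕ → Type := fun idx =>
  match idx with
  | .inl _ => ℝ
  | .inr _ => Fin (K + 1)

/-- The (discrete/Borel) measurable structure on the joint family. -/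
def jointMS (K : ℕ) : ∀ idx, MeasurableSpace (jointβ K idx) := fun idx =>
  match idx with
  | .inl _ => (inferInstance : MeasurableSpace ℝ)
  | .inr _ => (inferInstance : MeasurableSpace (Fin (K + 1)))

/-- The joint family: sample `X i k` at index `.inl (i, k)` and the
randomization seed `ξ t` of round `t = K + 1 + u > K` at index `.inr u`. -/
def jointF {K : ℕ} (X : Fin K → ℕ → Ω → ℝ) (ξ : ℕ → Ω → Fin (K + 1)) :
    ∀ idx, Ω → jointβ K idx := fun idx =>
  match idx with
  | .inl p => X p.1 p.2
  | .inr u => ξ (K + 1 + u)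

/-- The stochastic bandit environment: for every arm `i` the samples
`X i 0, X i 1, …` take values in `[0,1]`, the samples of each arm are
identically distributed, and the mean of every sample of arm `i` is `μ i`.
(Joint independence is required separately, together with the seeds.) -/
def BanditEnvNoIndep {K : ℕ} (P : Measure Ω) (X : Fin K → ℕ → Ω → ℝ) (μ : Fin K → ℝ) : Prop :=
  (∀ i k, Measurable (X i k)) ∧
  (∀ i k ω, X i k ω ∈ Set.Icc (0 : ℝ) 1) ∧
  (∀ i k, Measure.map (X i k) P = Measure.map (X i 0) P) ∧
  (∀ i k, ∫ ω, X i k ω ∂P = μ i)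

/-- The stochastic-rate-constrained UCB algorithm: rounds `1, …, K` pull each
arm once; at every round `t > K`, the arm `b t` is a maximizer of the UCB
index (ties broken by smallest index), and the pulled arm is `b t` if the
seed `ξ t` equals `K`, and the arm `ξ t` otherwise, where the seed takes the
value `K` with probability `1 - K·v` and each value `i < K` with probability
`v` (so that a uniformly random arm is pulled with probability `K·v`),
independently of everything else (i.e. of all samples and all other seeds). -/
def StochUCB {K : ℕ} (T : ℕ) (v : ℝ) (P : Measure Ω) (X : Fin K → ℕ → Ω → ℝ)
    (ξ : ℕ → Ω → Fin (K + 1)) (b arm : ℕ → Ω → Fin K) : Prop :=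
  (∀ t, Measurable (arm t)) ∧ (∀ t, Measurable (b t)) ∧ (∀ t, Measurable (ξ t)) ∧
  (∀ t ω, 1 ≤ t → t ≤ K → ((arm t ω : ℕ) = t - 1)) ∧
  (∀ t ω, K < t →
    (∀ j, ucb T X arm j t ω ≤ ucb T X arm (b t ω) t ω) ∧
    (∀ j, ucb T X arm j t ω = ucb T X arm (b t ω) t ω → b t ω ≤ j)) ∧
  (∀ t ω, K < t →
    arm t ω = if h : ((ξ t ω : ℕ) < K) then ⟨(ξ t ω : ℕ), h⟩ else b t ω) ∧
  (∀ t, K < t → ∀ j : Fin (K + 1),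
    P {ω | ξ t ω = j} = ENNReal.ofReal (if (j : ℕ) < K then v else 1 - (K : ℝ) * v)) ∧
  iIndepFun (m := jointMS K) (jointF X ξ) P

/-- The benchmark distribution `p*` over arms: `p*(i*) = 1 - K·v + v` and
`p*(i) = v` otherwise. -/
noncomputable def pstar {K : ℕ} (v : ℝ) (istar : Fin K) (i : Fin K) : ℝ :=
  v + (1 - (K : ℝ) * v) * (if i = istar then 1 else 0)

/-- The conditional distribution `p_t` of the pulled arm at round `t` given the
history: `p_t(b_t) = 1 - K·v + v` and `p_t(i) = v` otherwise. -/
noncomputable def pt {K : ℕ} (v : ℝ) (b : ℕ → Ω → Fin K) (t : ℕ) (ω : Ω) (i : Fin K) : ℝ :=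
  v + (1 - (K : ℝ) * v) * (if i = b t ω then 1 else 0)





lemma exp_sub_one_sub_eq (x : ℝ) :
    Real.exp x - 1 - x = ∑' n : ℕ, x ^ (n + 2) / (Nat.factorial (n + 2) : ℝ) := by
  have hs : Summable (fun n : ℕ => x ^ n / (Nat.factorial n : ℝ)) := Real.summable_pow_div_factorial x
  have hexp : Real.exp x = ∑' n : ℕ, x ^ n / (Nat.factorial n : ℝ) := by
    rw [Real.exp_eq_exp_ℝ, NormedSpace.exp_eq_tsum_div]
  have h1 : Summable (fun n : ℕ => x ^ (n + 1) / (Nat.factorial (n + 1) : ℝ)) := by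
    simpa using (summable_nat_add_iff 1).2 hs
  have h2 : Summable (fun n : ℕ => x ^ (n + 2) / (Nat.factorial (n + 2) : ℝ)) := by
    simpa using (summable_nat_add_iff 2).2 hs
  have e1 : (∑' n : ℕ, x ^ n / (Nat.factorial n : ℝ)) = x ^ 0 / (Nat.factorial 0 : ℝ) + ∑' n : ℕ, x ^ (n + 1) / (Nat.factorial (n + 1) : ℝ) :=
    Summable.tsum_eq_zero_add hs
  have e2 : (∑' n : ℕ, x ^ (n + 1) / (Nat.factorial (n + 1) : ℝ)) = x ^ 1 / (Nat.factorial 1 : ℝ) + ∑' n : ℕ, x ^ (n + 2) / (Nat.factorial (n + 2) : ℝ) := by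
    simpa using Summable.tsum_eq_zero_add h1
  rw [hexp, e1, e2]
  simp [Nat.factorial]

/-- master pointwise bound: for `0 ≤ t` and `|y| ≤ 1`,
`exp (t*y) ≤ 1 + t*y + y^2 * (exp t - 1 - t)`. -/
lemma exp_mul_le_master {t y : ℝ} (ht : 0 ≤ t) (hy : |y| ≤ 1) :
    Real.exp (t * y) ≤ 1 + t * y + y ^ 2 * (Real.exp t - 1 - t) := by
  have key : Real.exp (t * y) - 1 - t * y ≤ y ^ 2 * (Real.exp t - 1 - t) := by
    rw [exp_sub_one_sub_eq, exp_sub_one_sub_eq]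
    have hs : Summable (fun n : ℕ => t ^ n / (Nat.factorial n : ℝ)) := Real.summable_pow_div_factorial t
    have hsty : Summable (fun n : ℕ => (t * y) ^ n / (Nat.factorial n : ℝ)) := Real.summable_pow_div_factorial (t * y)
    have h2 : Summable (fun n : ℕ => (t * y) ^ (n + 2) / (Nat.factorial (n + 2) : ℝ)) := by
      simpa using (summable_nat_add_iff 2).2 hsty
    have h2' : Summable (fun n : ℕ => y ^ 2 * (t ^ (n + 2) / (Nat.factorial (n + 2) : ℝ))) := by
      exact (show Summable (fun n : ℕ => t ^ (n+2) / (Nat.factorial (n+2) : ℝ)) by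
        simpa using (summable_nat_add_iff 2).2 hs).mul_left _
    rw [← tsum_mul_left]
    refine Summable.tsum_le_tsum (fun n => ?_) h2 h2'
    have hfac : (0:ℝ) < (Nat.factorial (n + 2) : ℝ) := by positivity
    rw [div_le_iff₀ hfac]
    have hrw : y ^ 2 * (t ^ (n + 2) / (Nat.factorial (n + 2) : ℝ)) * (Nat.factorial (n + 2) : ℝ)
        = t ^ (n + 2) * y ^ 2 := by
      field_simp
    rw [hrw]
    calc (t * y) ^ (n + 2) ≤ |(t * y) ^ (n + 2)| := le_abs_self _
      _ = t ^ (n + 2) * |y| ^ (n + 2) := by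
          rw [abs_pow, abs_mul, abs_of_nonneg ht, mul_pow]
      _ ≤ t ^ (n + 2) * y ^ 2 := by
          refine mul_le_mul_of_nonneg_left ?_ (by positivity)
          calc |y| ^ (n + 2) ≤ |y| ^ 2 :=
                pow_le_pow_of_le_one (abs_nonneg y) hy (by omega)
            _ = y ^ 2 := sq_abs y
  linarith

lemma exp_sub_one_sub_le {t : ℝ} (ht0 : 0 ≤ t) (ht1 : t ≤ 1) :
    Real.exp t - 1 - t ≤ t ^ 2 := by
  have h := exp_mul_le_master (t := 1) (y := t) zero_le_one (by rwa [abs_of_nonneg ht0])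
  rw [one_mul] at h
  have h1 : Real.exp 1 - 1 - 1 ≤ 1 := by
    have := Real.exp_one_lt_d9
    linarith
  nlinarith [sq_nonneg t]


lemma chernoff_bernstein {Ω : Type} [MeasurableSpace Ω] (P : Measure Ω) [IsProbabilityMeasure P]
    (W : ℕ → Ω → ℝ) (hind : iIndepFun W P)
    (hmeas : ∀ k, Measurable (W k)) (hbd : ∀ k ω, W k ω ∈ Set.Icc (0:ℝ) 1)
    (n : ℕ) (δ : ℝ) (hδ0 : 0 ≤ δ) (hδ1 : δ ≤ 1) :
    P {ω | (n : ℝ) * δ ≤ ∑ k ∈ Finset.range n, (W k ω - ∫ ω', W k ω' ∂P)} ≤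
      ENNReal.ofReal (Real.exp (-(3/4) * n * δ^2)) := by
  set m : ℕ → ℝ := fun k => ∫ ω', W k ω' ∂P with hm
  set Y : ℕ → Ω → ℝ := fun k ω => W k ω - m k with hY
  have hWint : ∀ k, Integrable (W k) P := by
    intro k
    refine (integrable_const (1:ℝ)).mono' (hmeas k).aestronglyMeasurable ?_
    exact ae_of_all _ fun ω => by
      have := hbd k ω; rw [Real.norm_eq_abs, abs_le]; constructor <;> linarith [this.1, this.2]
  have hm01 : ∀ k, m k ∈ Set.Icc (0:ℝ) 1 := by
    intro k
    constructor
    · exact integral_nonneg fun ω => (hbd k ω).1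
    · calc ∫ ω', W k ω' ∂P ≤ ∫ _, (1:ℝ) ∂P := integral_mono (hWint k) (integrable_const 1)
            (fun ω => (hbd k ω).2)
      _ = 1 := by simp
  have hYmeas : ∀ k, Measurable (Y k) := fun k => (hmeas k).sub measurable_const
  have hYbd : ∀ k ω, |Y k ω| ≤ 1 := by
    intro k ω
    have h1 := hbd k ω; have h2 := hm01 k
    rw [abs_le]
    constructor
    · simp only [hY]; linarith [h1.1, h2.2]
    · simp only [hY]; linarith [h1.2, h2.1]
  have hYind : iIndepFun Y P := by
    have := hind.comp (fun k (x : ℝ) => x - m k) (fun k => measurable_id.sub measurable_const)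
    exact this
  have hYint : ∀ k, Integrable (Y k) P := fun k => (hWint k).sub (integrable_const _)
  -- mgf bound for each Y k
  have hmgf : ∀ k, mgf (Y k) P δ ≤ Real.exp (δ^2 / 4) := by
    intro k
    have hEY : ∫ ω, Y k ω ∂P = 0 := by
      simp only [hY]
      rw [integral_sub (hWint k) (integrable_const _)]
      simp [hm]
    have hY2int : Integrable (fun ω => (Y k ω)^2) P := by
      refine (integrable_const (1:ℝ)).mono' ((hYmeas k).pow_const 2).aestronglyMeasurable ?_
      refine ae_of_all _ fun ω => ?_
      rw [Real.norm_eq_abs, abs_pow]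
      have := hYbd k ω
      nlinarith [abs_nonneg (Y k ω)]
    have hEY2 : ∫ ω, (Y k ω)^2 ∂P ≤ 1/4 := by
      have hW2int : Integrable (fun ω => (W k ω)^2) P := by
        refine (integrable_const (1:ℝ)).mono' ((hmeas k).pow_const 2).aestronglyMeasurable ?_
        refine ae_of_all _ fun ω => ?_
        have := hbd k ω
        rw [Real.norm_eq_abs, abs_pow, abs_of_nonneg this.1]
        nlinarith [this.1, this.2]
      have hsq : ∀ ω, (Y k ω)^2 = (W k ω)^2 - 2 * m k * W k ω + (m k)^2 := by
        intro ω; simp only [hY]; ring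
      have h1 : ∫ ω, (Y k ω)^2 ∂P
          = (∫ ω, (W k ω)^2 ∂P) - 2 * m k * m k + (m k)^2 := by
        simp_rw [hsq]
        have hA : Integrable (fun ω => W k ω ^ 2 - 2 * m k * W k ω) P :=
          hW2int.sub ((hWint k).const_mul (2 * m k))
        have hB : Integrable (fun ω => 2 * m k * W k ω) P := (hWint k).const_mul (2 * m k)
        rw [integral_add hA (integrable_const _), integral_sub hW2int hB,
          integral_const_mul, integral_const]
        simp [hm]
      have h2 : ∫ ω, (W k ω)^2 ∂P ≤ m k := by
        simp only [hm]
        refine integral_mono hW2int (hWint k) fun ω => ?_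
        have := hbd k ω
        nlinarith [this.1, this.2]
      have h3 := (hm01 k).1
      have h4 := (hm01 k).2
      nlinarith [h1, h2, sq_nonneg (m k - 1/2)]
    -- pointwise master bound
    have hpt : ∀ ω, Real.exp (δ * Y k ω) ≤ 1 + δ * Y k ω + (Y k ω)^2 * (Real.exp δ - 1 - δ) :=
      fun ω => exp_mul_le_master hδ0 (hYbd k ω)
    have hexpint : Integrable (fun ω => Real.exp (δ * Y k ω)) P := by
      refine (integrable_const (Real.exp δ)).mono'
        ((measurable_const.mul (hYmeas k)).exp).aestronglyMeasurable ?_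
      refine ae_of_all _ fun ω => ?_
      rw [Real.norm_eq_abs, abs_of_pos (Real.exp_pos _), Real.exp_le_exp]
      have := (abs_le.mp (hYbd k ω)).2
      nlinarith
    have hrhsint : Integrable (fun ω => 1 + δ * Y k ω + (Y k ω)^2 * (Real.exp δ - 1 - δ)) P :=
      ((integrable_const 1).add ((hYint k).const_mul δ)).add (hY2int.mul_const _)
    have hge : Real.exp δ - 1 - δ ≥ 0 := by
      have := Real.add_one_le_exp δ; linarith
    calc mgf (Y k) P δ = ∫ ω, Real.exp (δ * Y k ω) ∂P := rfl
      _ ≤ ∫ ω, (1 + δ * Y k ω + (Y k ω)^2 * (Real.exp δ - 1 - δ)) ∂P :=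
          integral_mono hexpint hrhsint hpt
      _ = 1 + δ * (∫ ω, Y k ω ∂P) + (∫ ω, (Y k ω)^2 ∂P) * (Real.exp δ - 1 - δ) := by
          have hA : Integrable (fun ω => (1:ℝ) + δ * Y k ω) P :=
            (integrable_const 1).add ((hYint k).const_mul δ)
          have hB : Integrable (fun ω => (Y k ω)^2 * (Real.exp δ - 1 - δ)) P :=
            hY2int.mul_const _
          have hC : Integrable (fun ω => δ * Y k ω) P := (hYint k).const_mul δ
          rw [integral_add hA hB, integral_add (integrable_const 1) hC, integral_const,
            integral_const_mul, integral_mul_const]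
          simp
      _ ≤ 1 + 0 + (1/4) * (δ^2) := by
          rw [hEY]
          have hb := exp_sub_one_sub_le hδ0 hδ1
          have h2nn : (0:ℝ) ≤ ∫ ω, (Y k ω)^2 ∂P := integral_nonneg fun ω => sq_nonneg _
          nlinarith
      _ ≤ Real.exp (δ^2 / 4) := by
          have := Real.add_one_le_exp (δ^2/4); linarith
  -- Chernoff
  have hsum_meas : Measurable (fun ω => ∑ k ∈ Finset.range n, Y k ω) :=
    Finset.measurable_sum _ fun k _ => hYmeas k
  have hsum_bd : ∀ ω, |∑ k ∈ Finset.range n, Y k ω| ≤ n := by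
    intro ω
    calc |∑ k ∈ Finset.range n, Y k ω| ≤ ∑ k ∈ Finset.range n, |Y k ω| :=
        Finset.abs_sum_le_sum_abs _ _
      _ ≤ ∑ _k ∈ Finset.range n, (1:ℝ) := Finset.sum_le_sum fun k _ => hYbd k ω
      _ = n := by simp
  have hint : Integrable (fun ω => Real.exp (δ * ∑ k ∈ Finset.range n, Y k ω)) P := by
    refine (integrable_const (Real.exp (δ * n))).mono'
      ((measurable_const.mul hsum_meas).exp).aestronglyMeasurable ?_
    refine ae_of_all _ fun ω => ?_
    rw [Real.norm_eq_abs, abs_of_pos (Real.exp_pos _), Real.exp_le_exp]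
    have := (abs_le.mp (hsum_bd ω)).2
    nlinarith
  have hmgfsum : mgf (fun ω => ∑ k ∈ Finset.range n, Y k ω) P δ ≤ Real.exp (n * (δ^2/4)) := by
    have heq : (fun ω => ∑ k ∈ Finset.range n, Y k ω) = ∑ k ∈ Finset.range n, Y k := by
      funext ω; simp
    rw [heq, hYind.mgf_sum hYmeas (Finset.range n)]
    calc ∏ k ∈ Finset.range n, mgf (Y k) P δ
        ≤ ∏ _k ∈ Finset.range n, Real.exp (δ^2/4) :=
          Finset.prod_le_prod (fun k _ => mgf_nonneg) (fun k _ => hmgf k)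
      _ = Real.exp (n * (δ^2/4)) := by
          rw [Finset.prod_const, ← Real.exp_nat_mul]
          simp [Finset.card_range]
  have hcher := measure_ge_le_exp_mul_mgf (μ := P)
    (X := fun ω => ∑ k ∈ Finset.range n, Y k ω) ((n:ℝ) * δ) hδ0 hint
  have hset : {ω | (n : ℝ) * δ ≤ ∑ k ∈ Finset.range n, (W k ω - ∫ ω', W k ω' ∂P)}
      = {ω | (n : ℝ) * δ ≤ ∑ k ∈ Finset.range n, Y k ω} := rfl
  rw [hset, ENNReal.le_ofReal_iff_toReal_le (measure_ne_top _ _) (le_of_lt (Real.exp_pos _))]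
  refine le_trans hcher ?_
  calc Real.exp (-δ * ((n:ℝ)*δ)) * mgf (fun ω => ∑ k ∈ Finset.range n, Y k ω) P δ
        ≤ Real.exp (-δ * ((n:ℝ)*δ)) * Real.exp (n * (δ^2/4)) := by
          exact mul_le_mul_of_nonneg_left hmgfsum (le_of_lt (Real.exp_pos _))
      _ = Real.exp (-δ * ((n:ℝ)*δ) + n * (δ^2/4)) := (Real.exp_add _ _).symm
      _ ≤ Real.exp (-(3/4) * n * δ^2) := by
          rw [Real.exp_le_exp]
          have : (0:ℝ) ≤ n := Nat.cast_nonneg n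
          nlinarith [sq_nonneg δ]

section Aux
variable {K T : ℕ} {v : ℝ} {P : Measure Ω} {X : Fin K → ℕ → Ω → ℝ}
  {ξ : ℕ → Ω → Fin (K + 1)} {b arm : ℕ → Ω → Fin K}

lemma pullCount_le {arm : ℕ → Ω → Fin K} (j : Fin K) (r : ℕ) (ω : Ω) :
    pullCount arm j r ω ≤ r := by
  calc pullCount arm j r ω ≤ (Finset.Icc 1 r).card := Finset.card_filter_le _ _
    _ = r := by simp

lemma pullCount_measurable {m : MeasurableSpace Ω} {j : Fin K} {r : ℕ}
    (harm : ∀ s, 1 ≤ s → s ≤ r → Measurable[m] (arm s)) :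
    Measurable[m] (fun ω => pullCount arm j r ω) := by
  have heq : (fun ω => pullCount arm j r ω)
      = fun ω => ∑ s ∈ Finset.Icc 1 r, if arm s ω = j then 1 else 0 := by
    funext ω; unfold pullCount; rw [Finset.card_filter]
  rw [heq]
  refine Finset.measurable_sum _ fun s hs => ?_
  have hms : MeasurableSet[m] {ω | arm s ω = j} :=
    harm s (Finset.mem_Icc.mp hs).1 (Finset.mem_Icc.mp hs).2 (measurableSet_singleton j)
  exact Measurable.ite hms measurable_const measurable_const

lemma ucb_measurable {m : MeasurableSpace Ω} {j : Fin K} {t : ℕ} (ht : 1 ≤ t)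
    (harm : ∀ s, 1 ≤ s → s ≤ t - 1 → Measurable[m] (arm s))
    (hX : ∀ k, Measurable[m] (X j k)) :
    Measurable[m] (ucb T X arm j t) := by
  have hN : Measurable[m] (fun ω => pullCount arm j (t-1) ω) := pullCount_measurable harm
  have hNset : ∀ n : ℕ, MeasurableSet[m] {ω | pullCount arm j (t-1) ω = n} :=
    fun n => hN (measurableSet_singleton n)
  have hemp : Measurable[m] (empMean X arm j t) := by
    have heq : empMean X arm j t = fun ω => ∑ n ∈ Finset.range t,
        if pullCount arm j (t-1) ω = n then (∑ k ∈ Finset.range n, X j k ω) / n else 0 := by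
      funext ω
      have hlt : pullCount arm j (t-1) ω < t :=
        lt_of_le_of_lt (pullCount_le j (t-1) ω) (by omega)
      rw [Finset.sum_ite_eq (Finset.range t) (pullCount arm j (t-1) ω)
        (fun n => (∑ k ∈ Finset.range n, X j k ω) / (n:ℝ)), if_pos (Finset.mem_range.2 hlt)]
      rfl
    rw [heq]
    refine Finset.measurable_sum _ fun n _ => ?_
    exact Measurable.ite (hNset n)
      ((Finset.measurable_sum _ fun k _ => hX k).div_const _) measurable_const
  have hbonus : Measurable[m]
      (fun ω => 2 * Real.sqrt (Real.log T / (pullCount arm j (t-1) ω))) := by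
    have : (fun ω => 2 * Real.sqrt (Real.log T / (pullCount arm j (t-1) ω)))
        = (fun n : ℕ => 2 * Real.sqrt (Real.log T / n)) ∘ (fun ω => pullCount arm j (t-1) ω) := rfl
    rw [this]
    exact (measurable_of_countable _).comp hN
  exact hemp.add hbonus

/-- characterization of the tie-broken argmax. -/
lemma b_eq_iff {t : ℕ} {ω : Ω}
    (hb : (∀ j, ucb T X arm j t ω ≤ ucb T X arm (b t ω) t ω) ∧
      (∀ j, ucb T X arm j t ω = ucb T X arm (b t ω) t ω → b t ω ≤ j)) (a : Fin K) :
    b t ω = a ↔ ((∀ j, ucb T X arm j t ω ≤ ucb T X arm a t ω) ∧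
      (∀ j, j < a → ucb T X arm j t ω < ucb T X arm a t ω)) := by
  constructor
  · rintro rfl
    refine ⟨hb.1, fun j hj => ?_⟩
    rcases lt_or_eq_of_le (hb.1 j) with h | h
    · exact h
    · exact absurd (hb.2 j h) (not_le.mpr hj)
  · rintro ⟨h1, h2⟩
    have he : ucb T X arm (b t ω) t ω = ucb T X arm a t ω :=
      le_antisymm (h1 _) (hb.1 a)
    by_contra hne
    rcases lt_or_gt_of_ne hne with h | h
    · exact absurd he (ne_of_lt (h2 _ h))
    · exact absurd (hb.2 (b t ω) rfl) (not_le.mpr (by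
        exact absurd he (fun _ => by
          have := hb.2 a he.symm
          omega)))

end Aux


section Hist
variable {K T : ℕ} {v : ℝ} {P : Measure Ω} {X : Fin K → ℕ → Ω → ℝ}
  {ξ : ℕ → Ω → Fin (K + 1)} {b arm : ℕ → Ω → Fin K}

lemma measurable_fin_of_preimages {Ω' : Type} {m : MeasurableSpace Ω'} {n : ℕ} {f : Ω' → Fin n}
    (h : ∀ a, MeasurableSet[m] (f ⁻¹' {a})) : Measurable[m] f :=
  measurable_to_countable' h

/-- Index set of the history up to time `t`: all samples, and seeds of rounds `≤ t`. -/
def idxSet (K t : ℕ) : Set ((Fin K × ℕ) ⊕ ℕ) :=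
  {idx | ∀ u, idx = Sum.inr u → K + 1 + u ≤ t}

/-- σ-algebra of the history up to time `t`. -/
def histMS (X : Fin K → ℕ → Ω → ℝ) (ξ : ℕ → Ω → Fin (K + 1)) (t : ℕ) : MeasurableSpace Ω :=
  ⨆ idx ∈ idxSet K t, (jointMS K idx).comap (jointF X ξ idx)

lemma histMS_mono (X : Fin K → ℕ → Ω → ℝ) (ξ : ℕ → Ω → Fin (K + 1)) {t t' : ℕ} (h : t ≤ t') :
    histMS X ξ t ≤ histMS X ξ t' := by
  refine iSup₂_le fun idx hidx => ?_
  exact le_iSup₂ (f := fun idx (_ : idx ∈ idxSet K t') => (jointMS K idx).comap (jointF X ξ idx))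
    idx (fun u hu => le_trans (hidx u hu) h)

lemma measurable_X_histMS (i : Fin K) (k t : ℕ) : Measurable[histMS X ξ t] (X i k) := by
  rw [measurable_iff_comap_le]
  exact le_iSup₂ (f := fun idx (_ : idx ∈ idxSet K t) => (jointMS K idx).comap (jointF X ξ idx))
    (Sum.inl (i, k)) (fun u hu => by simp at hu)

lemma measurable_xi_histMS {s t : ℕ} (hs : K + 1 ≤ s) (hst : s ≤ t) :
    Measurable[histMS X ξ t] (ξ s) := by
  have harg : K + 1 + (s - (K + 1)) = s := by omega
  have hfe : ξ s = jointF X ξ (Sum.inr (s - (K + 1))) := by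
    show ξ s = ξ (K + 1 + (s - (K+1)))
    rw [harg]
  rw [measurable_iff_comap_le, hfe]
  exact le_iSup₂ (f := fun idx (_ : idx ∈ idxSet K t) => (jointMS K idx).comap (jointF X ξ idx))
    (Sum.inr (s - (K + 1))) (fun u hu => by
      simp only [Sum.inr.injEq] at hu; omega)

lemma meas_all (hsu : StochUCB T v P X ξ b arm) :
    ∀ t : ℕ, (1 ≤ t → Measurable[histMS X ξ t] (arm t)) ∧
      (K + 1 ≤ t → Measurable[histMS X ξ (t - 1)] (b t)) := by
  obtain ⟨hm_arm, hm_b, hm_ξ, hinit, hargmax, harmeq, hseed, hjoint⟩ := hsu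
  intro t
  induction t using Nat.strong_induction_on with
  | _ t IH =>
    have hbmeas : K + 1 ≤ t → Measurable[histMS X ξ (t - 1)] (b t) := by
      intro ht
      have harmH : ∀ s, 1 ≤ s → s ≤ t - 1 → Measurable[histMS X ξ (t-1)] (arm s) := by
        intro s hs1 hs2
        exact ((IH s (by omega)).1 hs1).mono (histMS_mono X ξ hs2) le_rfl
      have hucb : ∀ j : Fin K, Measurable[histMS X ξ (t-1)] (ucb T X arm j t) := fun j =>
        ucb_measurable (by omega) harmH (fun k => measurable_X_histMS j k (t-1))
      refine measurable_fin_of_preimages (m := histMS X ξ (t-1)) fun a => ?_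
      have hset : (b t) ⁻¹' {a} =
          (⋂ j, {ω | ucb T X arm j t ω ≤ ucb T X arm a t ω}) ∩
          (⋂ j, {ω | j < a → ucb T X arm j t ω < ucb T X arm a t ω}) := by
        ext ω
        have hiff := b_eq_iff (X := X) (arm := arm) (b := b) (hargmax t ω (by omega)) a
        simp only [Set.mem_preimage, Set.mem_singleton_iff, Set.mem_inter_iff, Set.mem_iInter,
          Set.mem_setOf_eq]
        exact hiff
      rw [hset]
      refine MeasurableSet.inter (MeasurableSet.iInter fun j => ?_)
        (MeasurableSet.iInter fun j => ?_)
      · exact measurableSet_le (hucb j) (hucb a)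
      · by_cases hja : j < a
        · simp only [hja, true_implies]
          exact measurableSet_lt (hucb j) (hucb a)
        · simp only [hja, false_implies]
          simp [Set.setOf_true]
    refine ⟨?_, hbmeas⟩
    intro ht1
    by_cases htK : t ≤ K
    · have : arm t = fun _ => (⟨t - 1, by omega⟩ : Fin K) := by
        funext ω
        exact Fin.ext (hinit t ω ht1 htK)
      rw [this]
      exact measurable_const
    · have htK' : K < t := by omega
      have heq : arm t = (fun p : Fin (K+1) × Fin K =>
            if h : ((p.1 : ℕ) < K) then (⟨(p.1 : ℕ), h⟩ : Fin K) else p.2)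
            ∘ (fun ω => (ξ t ω, b t ω)) := by
        funext ω
        exact harmeq t ω htK'
      rw [heq]
      have h1 : Measurable[histMS X ξ t] (ξ t) := measurable_xi_histMS (by omega) le_rfl
      have h2 : Measurable[histMS X ξ t] (b t) :=
        (hbmeas (by omega)).mono (histMS_mono X ξ (by omega)) le_rfl
      exact (measurable_of_countable _).comp (h1.prodMk h2)

lemma indep_b_xi (hXm : ∀ i k, Measurable (X i k)) (hsu : StochUCB T v P X ξ b arm)
    {t : ℕ} (ht : K + 1 ≤ t) :
    IndepFun (b t) (ξ t) P := by
  have hjoint := hsu.2.2.2.2.2.2.2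
  have hξm := hsu.2.2.1
  have hle : ∀ idx, (jointMS K idx).comap (jointF X ξ idx)
      ≤ (inferInstance : MeasurableSpace Ω) := by
    intro idx
    rw [← measurable_iff_comap_le]
    match idx with
    | Sum.inl p => exact hXm p.1 p.2
    | Sum.inr u => exact hξm (K + 1 + u)
  have hiind : iIndep (fun idx => (jointMS K idx).comap (jointF X ξ idx)) P :=
    (iIndepFun_iff_iIndep _ _ _).mp hjoint
  have hdisj : Disjoint (idxSet K (t-1)) ({Sum.inr (t - (K+1))} :
      Set ((Fin K × ℕ) ⊕ ℕ)) := by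
    rw [Set.disjoint_singleton_right]
    intro hmem
    have := hmem (t - (K+1)) rfl
    omega
  have hind := indep_iSup_of_disjoint hle hiind hdisj
  have hb : MeasurableSpace.comap (b t) (inferInstance : MeasurableSpace (Fin K))
      ≤ ⨆ idx ∈ idxSet K (t-1), (jointMS K idx).comap (jointF X ξ idx) := by
    rw [← measurable_iff_comap_le]
    exact (meas_all hsu t).2 ht
  have hξ : MeasurableSpace.comap (ξ t) (inferInstance : MeasurableSpace (Fin (K+1)))
      ≤ ⨆ idx ∈ ({Sum.inr (t - (K+1))} : Set ((Fin K × ℕ) ⊕ ℕ)),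
        (jointMS K idx).comap (jointF X ξ idx) := by
    have harg : K + 1 + (t - (K + 1)) = t := by omega
    have hfe : ξ t = jointF X ξ (Sum.inr (t - (K + 1))) := by
      show ξ t = ξ (K + 1 + (t - (K+1)))
      rw [harg]
    rw [hfe]
    exact le_iSup₂ (f := fun idx (_ : idx ∈ ({Sum.inr (t - (K+1))} :
        Set ((Fin K × ℕ) ⊕ ℕ))) => (jointMS K idx).comap (jointF X ξ idx))
      (Sum.inr (t - (K+1))) rfl
  exact indep_of_indep_of_le_right (indep_of_indep_of_le_left hind hb) hξ

lemma sub_indep (hjoint : iIndepFun (m := jointMS K) (jointF X ξ) P) (i : Fin K) :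
    iIndepFun (fun k => X i k) P := by
  classical
  rw [iIndepFun_iff_measure_inter_preimage_eq_mul]
  intro S sets hsets
  set e : ℕ ↪ ((Fin K × ℕ) ⊕ ℕ) := ⟨fun k => Sum.inl (i, k), fun a b h => by simpa using h⟩
    with he
  set sets' : ∀ idx : (Fin K × ℕ) ⊕ ℕ, Set (jointβ K idx) := fun idx =>
    match idx with
    | Sum.inl p => if p.1 = i then sets p.2 else Set.univ
    | Sum.inr _ => Set.univ
    with hsets'def
  have hs' : ∀ k, sets' (e k) = sets k := fun k => by
    change (if i = i then sets k else (Set.univ : Set ℝ)) = sets k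
    exact if_pos rfl
  have hsets' : ∀ idx, idx ∈ S.map e → MeasurableSet[jointMS K idx] (sets' idx) := by
    intro idx hidx
    rcases Finset.mem_map.mp hidx with ⟨k, hk, rfl⟩
    rw [hs' k]
    exact hsets k hk
  have key := hjoint.measure_inter_preimage_eq_mul (S.map e) hsets'
  have hmap1 : (⋂ idx ∈ S.map e, jointF X ξ idx ⁻¹' sets' idx)
      = ⋂ k ∈ S, X i k ⁻¹' sets k := by
    ext ω
    simp only [Set.mem_iInter, Finset.mem_map]
    constructor
    · intro h k hk
      have := h (e k) ⟨k, hk, rfl⟩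
      rw [hs' k] at this
      exact this
    · rintro h idx ⟨k, hk, rfl⟩
      have := h k hk
      show ω ∈ jointF X ξ (e k) ⁻¹' sets' (e k)
      rw [hs' k]
      exact this
  have hmap2 : (∏ idx ∈ S.map e, P (jointF X ξ idx ⁻¹' sets' idx))
      = ∏ k ∈ S, P (X i k ⁻¹' sets k) := by
    rw [Finset.prod_map]
    refine Finset.prod_congr rfl fun k hk => ?_
    rw [hs' k]
    rfl
  rw [hmap1, hmap2] at key
  exact key

end Hist

section Det
variable {K T : ℕ} {v : ℝ} {P : Measure Ω} {X : Fin K → ℕ → Ω → ℝ} {μ : Fin K → ℝ}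
  {ξ : ℕ → Ω → Fin (K + 1)} {b arm : ℕ → Ω → Fin K} {istar : Fin K}

/-- The good event: all empirical sums concentrate. -/
def goodEvent (K T : ℕ) (X : Fin K → ℕ → Ω → ℝ) (μ : Fin K → ℝ) : Set Ω :=
  {ω | ∀ i : Fin K, ∀ n : ℕ, 1 ≤ n → n ≤ T →
    |(∑ k ∈ Finset.range n, X i k ω) - n * μ i| ≤ 2 * Real.sqrt (n * Real.log T)}

lemma goodEvent_measurableSet (hXm : ∀ i k, Measurable (X i k)) :
    MeasurableSet (goodEvent K T X μ (Ω := Ω)) := by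
  have hrw : goodEvent K T X μ (Ω := Ω) = ⋂ (i : Fin K), ⋂ (n : ℕ), ⋂ (_ : 1 ≤ n), ⋂ (_ : n ≤ T),
      {ω | |(∑ k ∈ Finset.range n, X i k ω) - n * μ i| ≤ 2 * Real.sqrt (n * Real.log T)} := by
    ext ω; simp [goodEvent]
  rw [hrw]
  refine MeasurableSet.iInter fun i => MeasurableSet.iInter fun n =>
    MeasurableSet.iInter fun _ => MeasurableSet.iInter fun _ => ?_
  exact measurableSet_le
    (((Finset.measurable_sum _ fun k _ => hXm i k).sub_const _).abs) measurable_const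

lemma sqrt_div_mul {L : ℝ} (hL : 0 ≤ L) {n : ℕ} (hn : 1 ≤ n) :
    Real.sqrt (L / n) * n = Real.sqrt (n * L) := by
  have hn0 : (0:ℝ) < n := by exact_mod_cast hn
  have h1 : (n:ℝ) * L = L / n * (n:ℝ)^2 := by field_simp
  rw [h1, Real.sqrt_mul (by positivity), Real.sqrt_sq hn0.le]

lemma empMean_close {ω : Ω} (hT : 1 ≤ T) (hω : ω ∈ goodEvent K T X μ) (j : Fin K) {t : ℕ}
    (hn1 : 1 ≤ pullCount arm j (t-1) ω) (hnT : pullCount arm j (t-1) ω ≤ T) :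
    |empMean X arm j t ω - μ j| ≤ 2 * Real.sqrt (Real.log T / pullCount arm j (t-1) ω) := by
  set n := pullCount arm j (t-1) ω with hn
  have hn0 : (0:ℝ) < n := by exact_mod_cast hn1
  have hL : 0 ≤ Real.log T := Real.log_nonneg (by exact_mod_cast hT)
  have hgood := hω j n hn1 hnT
  have hemp : empMean X arm j t ω - μ j
      = ((∑ k ∈ Finset.range n, X j k ω) - n * μ j) / n := by
    unfold empMean
    rw [← hn]
    field_simp
  rw [hemp, abs_div, abs_of_pos hn0, div_le_iff₀ hn0, mul_assoc, sqrt_div_mul hL hn1]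
  exact hgood

lemma arm_of_seed_last (hsu : StochUCB T v P X ξ b arm) {s : ℕ} (hs : K < s) {ω : Ω}
    (hξ : ξ s ω = Fin.last K) : arm s ω = b s ω := by
  rw [hsu.2.2.2.2.2.1 s ω hs, dif_neg]
  rw [hξ]
  simp

lemma arm_initial (hsu : StochUCB T v P X ξ b arm) (j : Fin K) (ω : Ω) :
    arm ((j:ℕ)+1) ω = j := by
  have h := hsu.2.2.2.1 ((j:ℕ)+1) ω (by omega) (by omega)
  exact Fin.ext (by simpa using h)

lemma pullCount_pos (hsu : StochUCB T v P X ξ b arm) (j : Fin K) {t : ℕ} (ht : K ≤ t) (ω : Ω) :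
    1 ≤ pullCount arm j t ω := by
  have hmem : (j:ℕ)+1 ∈ (Finset.Icc 1 t).filter (fun s => arm s ω = j) := by
    refine Finset.mem_filter.mpr ⟨Finset.mem_Icc.mpr ⟨by omega, by have := j.2; omega⟩, ?_⟩
    exact arm_initial hsu j ω
  exact Finset.card_pos.mpr ⟨_, hmem⟩

lemma good_round (hsu : StochUCB T v P X ξ b arm) (hT : 2 ≤ T) (hKT : K ≤ T)
    {ω : Ω} (hω : ω ∈ goodEvent K T X μ) {t : ℕ} (ht1 : K + 1 ≤ t) (ht2 : t ≤ T)
    {a : Fin K} (hba : b t ω = a) :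
    μ istar - μ a ≤ 4 * Real.sqrt (Real.log T / pullCount arm a (t-1) ω) := by
  have hbnds : ∀ j : Fin K, 1 ≤ pullCount arm j (t-1) ω ∧ pullCount arm j (t-1) ω ≤ T :=
    fun j => ⟨pullCount_pos hsu j (by omega) ω, le_trans (pullCount_le j (t-1) ω) (by omega)⟩
  have hEa := empMean_close (arm := arm) (by omega) hω a (hbnds a).1 (hbnds a).2
  have hEi := empMean_close (arm := arm) (by omega) hω istar (hbnds istar).1 (hbnds istar).2
  have hub := (hsu.2.2.2.2.1 t ω (by omega)).1 istar
  rw [hba] at hub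
  unfold ucb at hub
  have h1 := abs_le.mp hEa
  have h2 := abs_le.mp hEi
  have hsq : 0 ≤ 2 * Real.sqrt (Real.log T / pullCount arm istar (t-1) ω) := by positivity
  linarith [h1.1, h1.2, h2.1, h2.2, hub]

lemma good_count (hsu : StochUCB T v P X ξ b arm) (hT : 2 ≤ T) (hKT : K ≤ T)
    {ω : Ω} (hω : ω ∈ goodEvent K T X μ) (a : Fin K)
    (ha : 0 < μ istar - μ a) :
    (((Finset.Icc (K+1) T).filter
        (fun t => ξ t ω = Fin.last K ∧ b t ω = a)).card : ℝ) * (μ istar - μ a)^2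
      ≤ 16 * Real.log T := by
  classical
  set S := (Finset.Icc (K+1) T).filter (fun t => ξ t ω = Fin.last K ∧ b t ω = a) with hS
  have hL : 0 ≤ Real.log T := Real.log_nonneg (by exact_mod_cast le_trans one_le_two hT)
  rcases S.eq_empty_or_nonempty with hemp | hne
  · rw [hemp]; simp; positivity
  · set tm := S.max' hne with htm
    have htmS : tm ∈ S := S.max'_mem hne
    obtain ⟨htmIcc, htmξ, htmb⟩ := Finset.mem_filter.mp htmS
    have htm1 : K + 1 ≤ tm := (Finset.mem_Icc.mp htmIcc).1
    have htm2 : tm ≤ T := (Finset.mem_Icc.mp htmIcc).2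
    -- the pull count at time tm dominates the count
    have hsubset : insert ((a:ℕ)+1) (S.erase tm)
        ⊆ (Finset.Icc 1 (tm-1)).filter (fun s => arm s ω = a) := by
      intro x hx
      rcases Finset.mem_insert.mp hx with rfl | hx
      · refine Finset.mem_filter.mpr ⟨Finset.mem_Icc.mpr ⟨by omega, by have := a.2; omega⟩, ?_⟩
        exact arm_initial hsu a ω
      · have hxS := Finset.mem_of_mem_erase hx
        have hxne := Finset.ne_of_mem_erase hx
        obtain ⟨hxIcc, hxξ, hxb⟩ := Finset.mem_filter.mp hxS
        have hx1 : K + 1 ≤ x := (Finset.mem_Icc.mp hxIcc).1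
        have hxlt : x < tm := lt_of_le_of_ne (S.le_max' x hxS) hxne
        refine Finset.mem_filter.mpr ⟨Finset.mem_Icc.mpr ⟨by omega, by omega⟩, ?_⟩
        rw [arm_of_seed_last hsu (by omega) hxξ, hxb]
    have hnotmem : ((a:ℕ)+1) ∉ S.erase tm := by
      intro hmem
      have := Finset.mem_of_mem_erase hmem
      obtain ⟨hIcc, _⟩ := Finset.mem_filter.mp this
      have h1 := (Finset.mem_Icc.mp hIcc).1
      have := a.2
      omega
    have hcard : S.card ≤ pullCount arm a (tm-1) ω := by
      have h1 : (insert ((a:ℕ)+1) (S.erase tm)).card = (S.erase tm).card + 1 :=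
        Finset.card_insert_of_notMem hnotmem
      have h2 : (S.erase tm).card = S.card - 1 := Finset.card_erase_of_mem htmS
      have h3 := Finset.card_le_card hsubset
      have h4 : 1 ≤ S.card := Finset.card_pos.mpr hne
      unfold pullCount
      omega
    -- the ucb bound at time tm
    have hround := good_round (istar := istar) hsu hT hKT hω htm1 htm2 htmb
    set n := pullCount arm a (tm-1) ω with hn
    have hn1 : 1 ≤ n := pullCount_pos hsu a (by omega) ω
    have hn0 : (0:ℝ) < n := by exact_mod_cast hn1
    have hΔsq : (μ istar - μ a)^2 ≤ 16 * (Real.log T / n) := by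
      have hs : Real.sqrt (Real.log T / n) ^ 2 = Real.log T / n :=
        Real.sq_sqrt (by positivity)
      nlinarith [hround, Real.sqrt_nonneg (Real.log T / n), ha]
    have hcard' : (S.card : ℝ) ≤ n := by exact_mod_cast hcard
    calc (S.card : ℝ) * (μ istar - μ a)^2 ≤ (n:ℝ) * (16 * (Real.log T / n)) := by
          have := sq_nonneg (μ istar - μ a)
          nlinarith [hcard', hΔsq, hn0]
      _ = 16 * Real.log T := by field_simp
end Det

section Bad
variable {K T : ℕ} {v : ℝ} {P : Measure Ω} {X : Fin K → ℕ → Ω → ℝ} {μ : Fin K → ℝ}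
  {ξ : ℕ → Ω → Fin (K + 1)} {b arm : ℕ → Ω → Fin K}

lemma tail_bound [IsProbabilityMeasure P] (hXm : ∀ i k, Measurable (X i k))
    (hbd : ∀ i k ω, X i k ω ∈ Set.Icc (0:ℝ) 1)
    (hid : ∀ (i : Fin K) k, ∫ ω, X i k ω ∂P = μ i)
    (hμ01 : ∀ i, μ i ∈ Set.Icc (0:ℝ) 1)
    (hjoint : iIndepFun (m := jointMS K) (jointF X ξ) P) (hT : 2 ≤ T)
    (i : Fin K) {n : ℕ} (hn1 : 1 ≤ n) :
    P {ω : Ω | 2 * Real.sqrt (n * Real.log T)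
        < |(∑ k ∈ Finset.range n, X i k ω) - n * μ i|}
      ≤ 2 * ENNReal.ofReal (Real.exp (-3 * Real.log T)) := by
  classical
  set L := Real.log T with hLdef
  have hL : 0 ≤ L := Real.log_nonneg (by exact_mod_cast le_trans one_le_two hT)
  have hn0 : (0:ℝ) < n := by exact_mod_cast hn1
  by_cases hcase : (n:ℝ) < 4 * L
  · -- the event is empty
    have hempty : {ω : Ω | 2 * Real.sqrt (n * L)
        < |(∑ k ∈ Finset.range n, X i k ω) - n * μ i|} = ∅ := by
      ext ω
      simp only [Set.mem_setOf_eq, Set.mem_empty_iff_false, iff_false, not_lt]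
      have habs : |(∑ k ∈ Finset.range n, X i k ω) - n * μ i| ≤ n := by
        have h1 : |(∑ k ∈ Finset.range n, X i k ω) - n * μ i|
            = |∑ k ∈ Finset.range n, (X i k ω - μ i)| := by
          rw [Finset.sum_sub_distrib]
          congr 2
          simp
        rw [h1]
        calc |∑ k ∈ Finset.range n, (X i k ω - μ i)|
            ≤ ∑ k ∈ Finset.range n, |X i k ω - μ i| := Finset.abs_sum_le_sum_abs _ _
          _ ≤ ∑ _k ∈ Finset.range n, (1:ℝ) := by
              refine Finset.sum_le_sum fun k _ => ?_
              have h2 := hbd i k ω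
              have h3 := hμ01 i
              rw [abs_le]
              constructor <;> [linarith [h2.1, h3.2]; linarith [h2.2, h3.1]]
          _ = n := by simp
      have hlt : (n:ℝ) ≤ 2 * Real.sqrt (n * L) := by
        have h4 : (n:ℝ) = Real.sqrt ((n:ℝ)^2) := (Real.sqrt_sq hn0.le).symm
        have h5 : Real.sqrt ((n:ℝ)^2) ≤ Real.sqrt (4 * (n * L)) := by
          apply Real.sqrt_le_sqrt
          nlinarith
        calc (n:ℝ) = Real.sqrt ((n:ℝ)^2) := h4
          _ ≤ Real.sqrt (4 * (n * L)) := h5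
          _ = 2 * Real.sqrt (n * L) := by
              rw [show (4:ℝ) * (n * L) = 2^2 * (n * L) by ring, Real.sqrt_mul (by positivity),
                Real.sqrt_sq (by norm_num)]
      exact le_trans habs hlt
    rw [hempty]
    simp
  · -- Chernoff case
    push_neg at hcase
    set δ : ℝ := 2 * Real.sqrt (L / n) with hδdef
    have hδ0 : 0 ≤ δ := by positivity
    have hδ1 : δ ≤ 1 := by
      have h1 : L / n ≤ 1/4 := by
        rw [div_le_iff₀ hn0]
        linarith
      have h2 : Real.sqrt (L / n) ≤ Real.sqrt (1/4) := Real.sqrt_le_sqrt h1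
      have h3 : Real.sqrt (1/4 : ℝ) = 1/2 := by
        rw [show (1/4:ℝ) = (1/2)^2 by norm_num, Real.sqrt_sq (by norm_num)]
      rw [hδdef]
      rw [h3] at h2
      linarith
    have hnδ : (n:ℝ) * δ = 2 * Real.sqrt (n * L) := by
      rw [hδdef, ← sqrt_div_mul hL hn1]
      ring
    have hδsq : -(3/4) * n * δ^2 = -3 * L := by
      have h6 : Real.sqrt (L / n) ^ 2 = L / n := Real.sq_sqrt (by positivity)
      have : δ^2 = 4 * (L / n) := by rw [hδdef]; rw [mul_pow]; rw [h6]; norm_num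
      rw [this, show -(3/4:ℝ) * n * (4 * (L / n)) = -3 * L * (n / n) by ring,
        div_self hn0.ne', mul_one]
    -- upper tail
    have hup := chernoff_bernstein P (fun k => X i k) (sub_indep hjoint i)
      (fun k => hXm i k) (fun k ω => hbd i k ω) n δ hδ0 hδ1
    -- lower tail, applied to 1 - X
    have hlowind : iIndepFun
        (fun k => (fun x : ℝ => 1 - x) ∘ (X i k)) P :=
      (sub_indep hjoint i).comp _ (fun k => measurable_const.sub measurable_id)
    have hlow := chernoff_bernstein P (fun k ω => 1 - X i k ω) hlowind
      (fun k => measurable_const.sub (hXm i k))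
      (fun k ω => by
        have h := hbd i k ω
        constructor
        · show (0:ℝ) ≤ 1 - X i k ω
          linarith [h.2]
        · show (1:ℝ) - X i k ω ≤ 1
          linarith [h.1])
      n δ hδ0 hδ1
    have hWint : ∀ k, Integrable (X i k) P := by
      intro k
      refine (integrable_const (1:ℝ)).mono' (hXm i k).aestronglyMeasurable ?_
      exact ae_of_all _ fun ω => by
        have := hbd i k ω; rw [Real.norm_eq_abs, abs_le]; constructor <;> linarith [this.1, this.2]
    have hlowmean : ∀ k : ℕ, (∫ ω, (1 - X i k ω) ∂P) = 1 - μ i := by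
      intro k
      rw [integral_sub (integrable_const 1) (hWint k), integral_const, hid i k]
      simp
    -- event inclusion
    have hsub : {ω : Ω | 2 * Real.sqrt (n * L)
          < |(∑ k ∈ Finset.range n, X i k ω) - n * μ i|}
        ⊆ {ω : Ω | (n:ℝ) * δ ≤ ∑ k ∈ Finset.range n, (X i k ω - ∫ ω', X i k ω' ∂P)}
          ∪ {ω : Ω | (n:ℝ) * δ ≤ ∑ k ∈ Finset.range n, ((1 - X i k ω) - ∫ ω', (1 - X i k ω') ∂P)} := by
      intro ω hω
      simp only [Set.mem_setOf_eq] at hω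
      have hsum1 : ∑ k ∈ Finset.range n, (X i k ω - ∫ ω', X i k ω' ∂P)
          = (∑ k ∈ Finset.range n, X i k ω) - n * μ i := by
        rw [Finset.sum_sub_distrib]
        congr 1
        simp [hid i]
      have hsum2 : ∑ k ∈ Finset.range n, ((1 - X i k ω) - ∫ ω', (1 - X i k ω') ∂P)
          = -((∑ k ∈ Finset.range n, X i k ω) - n * μ i) := by
        have : ∀ k, (1 - X i k ω) - (∫ ω', (1 - X i k ω') ∂P) = μ i - X i k ω := by
          intro k; rw [hlowmean k]; ring
        rw [Finset.sum_congr rfl fun k _ => this k, Finset.sum_sub_distrib]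
        simp only [Finset.sum_const, Finset.card_range, nsmul_eq_mul]
        ring
      rcases abs_cases ((∑ k ∈ Finset.range n, X i k ω) - n * μ i) with ⟨heq, _⟩ | ⟨heq, _⟩
      · left
        simp only [Set.mem_setOf_eq]
        rw [hsum1, hnδ]
        rw [heq] at hω
        linarith
      · right
        simp only [Set.mem_setOf_eq]
        rw [hsum2, hnδ]
        rw [heq] at hω
        linarith
    calc P {ω : Ω | 2 * Real.sqrt (n * L)
          < |(∑ k ∈ Finset.range n, X i k ω) - n * μ i|}
        ≤ P ({ω : Ω | (n:ℝ) * δ ≤ ∑ k ∈ Finset.range n, (X i k ω - ∫ ω', X i k ω' ∂P)}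
          ∪ {ω : Ω | (n:ℝ) * δ ≤ ∑ k ∈ Finset.range n, ((1 - X i k ω) - ∫ ω', (1 - X i k ω') ∂P)}) :=
          measure_mono hsub
      _ ≤ P {ω : Ω | (n:ℝ) * δ ≤ ∑ k ∈ Finset.range n, (X i k ω - ∫ ω', X i k ω' ∂P)}
          + P {ω : Ω | (n:ℝ) * δ ≤ ∑ k ∈ Finset.range n, ((1 - X i k ω) - ∫ ω', (1 - X i k ω') ∂P)} :=
          measure_union_le _ _
      _ ≤ ENNReal.ofReal (Real.exp (-(3/4) * n * δ^2))
          + ENNReal.ofReal (Real.exp (-(3/4) * n * δ^2)) := add_le_add hup hlow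
      _ = 2 * ENNReal.ofReal (Real.exp (-3 * L)) := by
          rw [hδsq]; ring

lemma bad_prob [IsProbabilityMeasure P] (hXm : ∀ i k, Measurable (X i k))
    (hbd : ∀ i k ω, X i k ω ∈ Set.Icc (0:ℝ) 1)
    (hid : ∀ (i : Fin K) k, ∫ ω, X i k ω ∂P = μ i)
    (hμ01 : ∀ i, μ i ∈ Set.Icc (0:ℝ) 1)
    (hjoint : iIndepFun (m := jointMS K) (jointF X ξ) P) (hT : 2 ≤ T) :
    P (goodEvent K T X μ (Ω := Ω))ᶜ
      ≤ (2 * K * T) * ENNReal.ofReal (Real.exp (-3 * Real.log T)) := by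
  classical
  have hsub : (goodEvent K T X μ (Ω := Ω))ᶜ ⊆
      ⋃ i ∈ (Finset.univ : Finset (Fin K)), ⋃ n ∈ Finset.Icc 1 T,
        {ω : Ω | 2 * Real.sqrt (n * Real.log T)
          < |(∑ k ∈ Finset.range n, X i k ω) - n * μ i|} := by
    intro ω hω
    simp only [goodEvent, Set.mem_compl_iff, Set.mem_setOf_eq] at hω
    push_neg at hω
    obtain ⟨i, n, hn1, hnT, hgt⟩ := hω
    refine Set.mem_biUnion (Finset.mem_univ i) ?_
    exact Set.mem_biUnion (Finset.mem_Icc.mpr ⟨hn1, hnT⟩) hgt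
  refine le_trans (measure_mono hsub) ?_
  refine le_trans (measure_biUnion_finset_le _ _) ?_
  have hbound : ∀ i : Fin K,
      P (⋃ n ∈ Finset.Icc 1 T, {ω : Ω | 2 * Real.sqrt (n * Real.log T)
          < |(∑ k ∈ Finset.range n, X i k ω) - n * μ i|})
        ≤ (T : ℕ) * (2 * ENNReal.ofReal (Real.exp (-3 * Real.log T))) := by
    intro i
    refine le_trans (measure_biUnion_finset_le _ _) ?_
    calc ∑ n ∈ Finset.Icc 1 T, P {ω : Ω | 2 * Real.sqrt (n * Real.log T)
          < |(∑ k ∈ Finset.range n, X i k ω) - n * μ i|}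
        ≤ ∑ n ∈ Finset.Icc 1 T, (2 * ENNReal.ofReal (Real.exp (-3 * Real.log T))) := by
          refine Finset.sum_le_sum fun n hn => ?_
          exact tail_bound hXm hbd hid hμ01 hjoint hT i (Finset.mem_Icc.mp hn).1
      _ = (T : ℕ) * (2 * ENNReal.ofReal (Real.exp (-3 * Real.log T))) := by
          rw [Finset.sum_const, Nat.card_Icc]
          simp [nsmul_eq_mul]
  calc ∑ i ∈ (Finset.univ : Finset (Fin K)),
        P (⋃ n ∈ Finset.Icc 1 T, {ω : Ω | 2 * Real.sqrt (n * Real.log T)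
          < |(∑ k ∈ Finset.range n, X i k ω) - n * μ i|})
      ≤ ∑ _i ∈ (Finset.univ : Finset (Fin K)),
        ((T : ℕ) * (2 * ENNReal.ofReal (Real.exp (-3 * Real.log T)))) :=
        Finset.sum_le_sum fun i _ => hbound i
    _ = (2 * K * T) * ENNReal.ofReal (Real.exp (-3 * Real.log T)) := by
        rw [Finset.sum_const, Finset.card_univ, Fintype.card_fin]
        simp [nsmul_eq_mul]
        ring
end Bad

end FairBandit

open FairBandit MeasureTheory ProbabilityTheory

/-- For the stochastic-rate-constrained UCB algorithm there
is an absolute constant `C > 0` such that the regret satisfies the worst-case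
bound `Reg_T ≤ C·(√(T·K·ln T) + K·ln T)`. -/
theorem stoch_ucb_worst_case_regret_bound :
    ∃ C : ℝ, 0 < C ∧
      ∀ (Ω : Type) (_ : MeasurableSpace Ω) (P : Measure Ω), IsProbabilityMeasure P →
      ∀ (K T : ℕ) (v : ℝ) (X : Fin K → ℕ → Ω → ℝ) (μ : Fin K → ℝ) (istar : Fin K)
        (ξ : ℕ → Ω → Fin (K + 1)) (b arm : ℕ → Ω → Fin K),
        2 ≤ K → max K 2 ≤ T → 0 < v → v ≤ 1 / (K : ℝ) →
        BanditEnvNoIndep P X μ → StochUCB T v P X ξ b arm →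
        (∀ j, μ j ≤ μ istar) →
        (∫ ω, (∑ t ∈ Finset.Icc (K + 1) T,
            (∑ i, pstar v istar i * μ i - ∑ i, pt v b t ω i * μ i)) ∂P) ≤
          C * (Real.sqrt ((T : ℝ) * K * Real.log T) + (K : ℝ) * Real.log T) := by
  classical
  refine ⟨100, by norm_num, ?_⟩
  intro Ω mΩ P hP K T v X μ istar ξ b arm hK hmaxT hv0 hv1 henv hsu hopt
  obtain ⟨hXm, hbd, hident, hid⟩ := henv
  have hT2 : 2 ≤ T := le_trans (le_max_right _ _) hmaxT
  have hKT : K ≤ T := le_trans (le_max_left _ _) hmaxT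
  set L := Real.log T with hLdef
  have hT1R : (1:ℝ) < T := by exact_mod_cast lt_of_lt_of_le one_lt_two hT2
  have hL0 : 0 < L := Real.log_pos hT1R
  have hT0R : (0:ℝ) < T := by linarith
  have hK0 : (0:ℝ) < K := by
    have : (2:ℝ) ≤ K := by exact_mod_cast hK
    linarith
  have hKv : (K:ℝ) * v ≤ 1 := by
    rw [le_div_iff₀ hK0] at hv1
    linarith
  have h1Kv0 : 0 ≤ 1 - (K:ℝ) * v := by linarith
  have h1Kv1 : 1 - (K:ℝ) * v ≤ 1 := by nlinarith
  have hμ01 : ∀ i, μ i ∈ Set.Icc (0:ℝ) 1 := by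
    intro i
    have hWint : Integrable (X i 0) P := by
      refine (integrable_const (1:ℝ)).mono' (hXm i 0).aestronglyMeasurable ?_
      exact ae_of_all _ fun ω => by
        have := hbd i 0 ω; rw [Real.norm_eq_abs, abs_le]
        constructor <;> linarith [this.1, this.2]
    rw [← hid i 0]
    constructor
    · exact integral_nonneg fun ω => (hbd i 0 ω).1
    · calc ∫ ω, X i 0 ω ∂P ≤ ∫ _, (1:ℝ) ∂P :=
          integral_mono hWint (integrable_const 1) (fun ω => (hbd i 0 ω).2)
        _ = 1 := by simp
  have hΔ0 : ∀ a, 0 ≤ μ istar - μ a := fun a => by linarith [hopt a]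
  have hΔ1 : ∀ a, μ istar - μ a ≤ 1 := fun a => by
    linarith [(hμ01 a).1, (hμ01 istar).2]
  have hmeas_b : ∀ t, Measurable (b t) := hsu.2.1
  have hmeas_ξ : ∀ t, Measurable (ξ t) := hsu.2.2.1
  -- Step 1: rewrite the integrand
  have hsums : ∀ (a : Fin K),
      (∑ i, (v + (1-(K:ℝ)*v) * (if i = a then 1 else 0)) * μ i)
        = v * ∑ i, μ i + (1-(K:ℝ)*v) * μ a := by
    intro a
    have hterm : ∀ i : Fin K, (v + (1-(K:ℝ)*v) * (if i = a then 1 else 0)) * μ i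
        = v * μ i + (1-(K:ℝ)*v) * (if a = i then μ i else 0) := by
      intro i
      by_cases h : i = a
      · subst h; simp; ring
      · have h' : ¬ (a = i) := fun hh => h hh.symm
        simp [h, h']
    rw [Finset.sum_congr rfl fun i _ => hterm i, Finset.sum_add_distrib, ← Finset.mul_sum,
      ← Finset.mul_sum, Finset.sum_ite_eq Finset.univ a μ, if_pos (Finset.mem_univ a)]
  have hstep1 : (fun ω => ∑ t ∈ Finset.Icc (K + 1) T,
      (∑ i, pstar v istar i * μ i - ∑ i, pt v b t ω i * μ i))
      = fun ω => ∑ t ∈ Finset.Icc (K + 1) T, (1-(K:ℝ)*v) * (μ istar - μ (b t ω)) := by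
    funext ω
    refine Finset.sum_congr rfl fun t _ => ?_
    have h1 := hsums istar
    have h2 := hsums (b t ω)
    unfold pstar pt
    rw [h1, h2]
    ring
  -- integrability of the per-round terms
  have hμb_meas : ∀ t, Measurable (fun ω => μ (b t ω)) :=
    fun t => (measurable_of_countable μ).comp (hmeas_b t)
  have hFt_int : ∀ t, Integrable (fun ω => (1-(K:ℝ)*v) * (μ istar - μ (b t ω))) P := by
    intro t
    refine (integrable_const (1:ℝ)).mono'
      ((measurable_const.sub (hμb_meas t)).const_mul _).aestronglyMeasurable ?_
    refine ae_of_all _ fun ω => ?_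
    rw [Real.norm_eq_abs, abs_mul, abs_of_nonneg h1Kv0, abs_of_nonneg (hΔ0 (b t ω))]
    calc (1-(K:ℝ)*v) * (μ istar - μ (b t ω)) ≤ 1 * 1 :=
      mul_le_mul h1Kv1 (hΔ1 _) (hΔ0 _) (by norm_num)
    _ = 1 := by norm_num
  -- seed probability
  have hseedP : ∀ t, K < t → P {ω | ξ t ω = Fin.last K} = ENNReal.ofReal (1 - (K:ℝ)*v) := by
    intro t ht
    have h := hsu.2.2.2.2.2.2.1 t ht (Fin.last K)
    simpa using h
  -- Step 3: per-round evaluation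
  have ht_eval : ∀ t ∈ Finset.Icc (K+1) T,
      ∫ ω, (1-(K:ℝ)*v) * (μ istar - μ (b t ω)) ∂P
        = ∑ a, (μ istar - μ a) *
            (P {ω | ξ t ω = Fin.last K ∧ b t ω = a}).toReal := by
    intro t ht
    have ht1 : K + 1 ≤ t := (Finset.mem_Icc.mp ht).1
    have hindep := indep_b_xi hXm hsu ht1
    have hexp : (fun ω => (1-(K:ℝ)*v) * (μ istar - μ (b t ω)))
        = fun ω => ∑ a, ((1-(K:ℝ)*v) * (μ istar - μ a)) *
            (if b t ω = a then (1:ℝ) else 0) := by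
      funext ω
      have hite : ∀ a : Fin K, ((1-(K:ℝ)*v) * (μ istar - μ a)) *
          (if b t ω = a then (1:ℝ) else 0)
          = if b t ω = a then (1-(K:ℝ)*v) * (μ istar - μ a) else 0 := by
        intro a; rw [mul_ite, mul_one, mul_zero]
      rw [Finset.sum_congr rfl (fun a _ => hite a),
        Finset.sum_ite_eq Finset.univ (b t ω)
          (fun a => (1-(K:ℝ)*v) * (μ istar - μ a)), if_pos (Finset.mem_univ _)]
    have hbset : ∀ a : Fin K, MeasurableSet {ω | b t ω = a} :=
      fun a => hmeas_b t (measurableSet_singleton a)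
    have hterm_int : ∀ a : Fin K, Integrable (fun ω =>
        ((1-(K:ℝ)*v) * (μ istar - μ a)) * (if b t ω = a then (1:ℝ) else 0)) P := by
      intro a
      have : (fun ω => ((1-(K:ℝ)*v) * (μ istar - μ a)) * (if b t ω = a then (1:ℝ) else 0))
          = Set.indicator {ω | b t ω = a} (fun _ => (1-(K:ℝ)*v) * (μ istar - μ a)) := by
        funext ω
        rw [Set.indicator_apply]
        by_cases h : b t ω = a <;> simp [h, Set.mem_setOf_eq]
      rw [this]
      exact (integrable_const _).indicator (hbset a)
    rw [hexp, integral_finset_sum _ (fun a _ => hterm_int a)]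
    refine Finset.sum_congr rfl fun a _ => ?_
    have hind : (fun ω => ((1-(K:ℝ)*v) * (μ istar - μ a)) * (if b t ω = a then (1:ℝ) else 0))
        = Set.indicator {ω | b t ω = a} (fun _ => (1-(K:ℝ)*v) * (μ istar - μ a)) := by
      funext ω
      rw [Set.indicator_apply]
      by_cases h : b t ω = a <;> simp [h, Set.mem_setOf_eq]
    rw [hind, integral_indicator_const _ (hbset a), smul_eq_mul]
    -- now use independence
    have hprod := hindep.measure_inter_preimage_eq_mul {a} {Fin.last K}
      (measurableSet_singleton a) (measurableSet_singleton (Fin.last K))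
    have hseteq : {ω | ξ t ω = Fin.last K ∧ b t ω = a}
        = (b t) ⁻¹' {a} ∩ (ξ t) ⁻¹' {Fin.last K} := by
      ext ω; simp [Set.mem_setOf_eq, and_comm]
    have hbpre : (b t) ⁻¹' {a} = {ω | b t ω = a} := rfl
    have hξpre : (ξ t) ⁻¹' {Fin.last K} = {ω | ξ t ω = Fin.last K} := rfl
    rw [hseteq, hprod, hbpre, hξpre, hseedP t (by omega), ENNReal.toReal_mul,
      ENNReal.toReal_ofReal h1Kv0]
    simp only [measureReal_def]
    ring
  -- define the counts
  set N : Fin K → Ω → ℕ := fun a ω => ((Finset.Icc (K+1) T).filter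
    (fun t => ξ t ω = Fin.last K ∧ b t ω = a)).card with hNdef
  set G : Ω → ℝ := fun ω => ∑ a, (μ istar - μ a) * (N a ω : ℝ) with hGdef
  have hScond : ∀ t a, MeasurableSet {ω : Ω | ξ t ω = Fin.last K ∧ b t ω = a} := by
    intro t a
    have h1 : MeasurableSet {ω : Ω | ξ t ω = Fin.last K} :=
      hmeas_ξ t (measurableSet_singleton _)
    have h2 : MeasurableSet {ω : Ω | b t ω = a} := hmeas_b t (measurableSet_singleton _)
    exact (h1.inter h2 : MeasurableSet ({ω : Ω | ξ t ω = Fin.last K} ∩ {ω : Ω | b t ω = a}))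
  have hNcast : ∀ a ω, (N a ω : ℝ) = ∑ t ∈ Finset.Icc (K+1) T,
      (if ξ t ω = Fin.last K ∧ b t ω = a then (1:ℝ) else 0) := by
    intro a ω
    have hrfl : N a ω = ((Finset.Icc (K+1) T).filter
        (fun t => ξ t ω = Fin.last K ∧ b t ω = a)).card := rfl
    rw [hrfl, Finset.card_filter]
    push_cast
    rfl
  -- Step 4: the regret equals ∫ G
  have hstep4 : ∑ t ∈ Finset.Icc (K+1) T, ∑ a : Fin K, (μ istar - μ a) *
      (P {ω | ξ t ω = Fin.last K ∧ b t ω = a}).toReal = ∫ ω, G ω ∂P := by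
    have hperm : ∀ (t : ℕ) (a : Fin K), ∫ ω,
        ((μ istar - μ a) * (if ξ t ω = Fin.last K ∧ b t ω = a then (1:ℝ) else 0)) ∂P
        = (μ istar - μ a) * (P {ω | ξ t ω = Fin.last K ∧ b t ω = a}).toReal := by
      intro t a
      have hind : (fun ω => (μ istar - μ a) *
          (if ξ t ω = Fin.last K ∧ b t ω = a then (1:ℝ) else 0))
          = Set.indicator {ω | ξ t ω = Fin.last K ∧ b t ω = a} (fun _ => μ istar - μ a) := by
        funext ω
        rw [Set.indicator_apply]
        by_cases h : ξ t ω = Fin.last K ∧ b t ω = a <;> simp [h, Set.mem_setOf_eq]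
      rw [hind, integral_indicator_const _ (hScond t a), smul_eq_mul]
      simp only [measureReal_def]
      ring
    have hterm_int : ∀ (t : ℕ) (a : Fin K), Integrable (fun ω => (μ istar - μ a) *
        (if ξ t ω = Fin.last K ∧ b t ω = a then (1:ℝ) else 0)) P := by
      intro t a
      have hi : (fun ω => (μ istar - μ a) *
          (if ξ t ω = Fin.last K ∧ b t ω = a then (1:ℝ) else 0))
          = Set.indicator {ω | ξ t ω = Fin.last K ∧ b t ω = a} (fun _ => μ istar - μ a) := by
        funext ω
        rw [Set.indicator_apply]
        by_cases h : ξ t ω = Fin.last K ∧ b t ω = a <;> simp [h, Set.mem_setOf_eq]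
      rw [hi]
      exact (integrable_const _).indicator (hScond t a)
    have hGrw : G = fun ω => ∑ t ∈ Finset.Icc (K+1) T, ∑ a : Fin K, ((μ istar - μ a) *
        (if ξ t ω = Fin.last K ∧ b t ω = a then (1:ℝ) else 0)) := by
      funext ω
      rw [hGdef]
      rw [Finset.sum_comm]
      refine Finset.sum_congr rfl fun a _ => ?_
      rw [hNcast a ω, Finset.mul_sum]
    rw [hGrw, integral_finset_sum _ (fun t _ =>
      integrable_finset_sum _ (fun a _ => hterm_int t a))]
    refine Finset.sum_congr rfl fun t _ => ?_
    rw [integral_finset_sum _ (fun a _ => hterm_int t a)]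
    exact (Finset.sum_congr rfl fun a _ => (hperm t a)).symm
  -- pointwise bounds on G
  have hNsum : ∀ ω, ∑ a : Fin K, (N a ω : ℝ) ≤ T := by
    intro ω
    have h1 : ∑ a : Fin K, (N a ω : ℝ) = ∑ t ∈ Finset.Icc (K+1) T, ∑ a : Fin K,
        (if ξ t ω = Fin.last K ∧ b t ω = a then (1:ℝ) else 0) := by
      rw [Finset.sum_congr rfl fun a _ => hNcast a ω, Finset.sum_comm]
    rw [h1]
    calc ∑ t ∈ Finset.Icc (K+1) T, ∑ a : Fin K,
        (if ξ t ω = Fin.last K ∧ b t ω = a then (1:ℝ) else 0)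
        ≤ ∑ _t ∈ Finset.Icc (K+1) T, (1:ℝ) := by
          refine Finset.sum_le_sum fun t _ => ?_
          calc ∑ a : Fin K, (if ξ t ω = Fin.last K ∧ b t ω = a then (1:ℝ) else 0)
              ≤ ∑ a : Fin K, (if b t ω = a then (1:ℝ) else 0) := by
                refine Finset.sum_le_sum fun a _ => ?_
                by_cases h : ξ t ω = Fin.last K ∧ b t ω = a
                · rw [if_pos h, if_pos h.2]
                · rw [if_neg h]
                  by_cases h2 : b t ω = a <;> simp [h2]
            _ = 1 := by
                rw [Finset.sum_ite_eq Finset.univ (b t ω) (fun _ => (1:ℝ))]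
                simp
      _ = ((T - K : ℕ) : ℝ) := by
          rw [Finset.sum_const, Nat.card_Icc]
          simp
      _ ≤ T := by
          have : T - K ≤ T := Nat.sub_le T K
          exact_mod_cast this
  have hG0 : ∀ ω, 0 ≤ G ω := by
    intro ω
    rw [hGdef]
    exact Finset.sum_nonneg fun a _ => mul_nonneg (hΔ0 a) (by positivity)
  have hGleT : ∀ ω, G ω ≤ T := by
    intro ω
    rw [hGdef]
    calc ∑ a : Fin K, (μ istar - μ a) * (N a ω : ℝ)
        ≤ ∑ a : Fin K, (N a ω : ℝ) := by
          refine Finset.sum_le_sum fun a _ => ?_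
          have := hΔ1 a
          have h0 : (0:ℝ) ≤ (N a ω : ℝ) := by positivity
          nlinarith [hΔ0 a]
      _ ≤ T := hNsum ω
  -- measurability and integrability of G
  have hNmeas : ∀ a, Measurable (fun ω => (N a ω : ℝ)) := by
    intro a
    have : (fun ω => (N a ω : ℝ)) = fun ω => ∑ t ∈ Finset.Icc (K+1) T,
        (if ξ t ω = Fin.last K ∧ b t ω = a then (1:ℝ) else 0) := funext fun ω => hNcast a ω
    rw [this]
    exact Finset.measurable_sum _ fun t _ =>
      Measurable.ite (hScond t a) measurable_const measurable_const
  have hGmeas : Measurable G := by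
    rw [hGdef]
    exact Finset.measurable_sum _ fun a _ => (hNmeas a).const_mul _
  have hGint : Integrable G P := by
    refine (integrable_const (T:ℝ)).mono' hGmeas.aestronglyMeasurable ?_
    refine ae_of_all _ fun ω => ?_
    rw [Real.norm_eq_abs, abs_of_nonneg (hG0 ω)]
    exact hGleT ω
  -- split over the good event
  have hgood_meas : MeasurableSet (goodEvent K T X μ (Ω := Ω)) := goodEvent_measurableSet hXm
  have hsplit : ∫ ω, G ω ∂P = (∫ ω in goodEvent K T X μ, G ω ∂P)
      + ∫ ω in (goodEvent K T X μ)ᶜ, G ω ∂P :=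
    (integral_add_compl hgood_meas hGint).symm
  -- good part
  set ε : ℝ := Real.sqrt (16*(K:ℝ)*L/T) with hεdef
  have hε0 : 0 < ε := Real.sqrt_pos.mpr (by positivity)
  have hgoodpt : ∀ ω ∈ goodEvent K T X μ (Ω := Ω), G ω ≤ ε * T + 16*(K:ℝ)*L/ε := by
    intro ω hω
    rw [hGdef]
    have hpera : ∀ a : Fin K, (μ istar - μ a) * (N a ω : ℝ)
        ≤ ε * (N a ω : ℝ) + 16*L/ε := by
      intro a
      have hN0 : (0:ℝ) ≤ (N a ω : ℝ) := by positivity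
      by_cases hc : μ istar - μ a ≤ ε
      · have h16 : 0 ≤ 16*L/ε := by positivity
        nlinarith
      · push_neg at hc
        have hΔpos : 0 < μ istar - μ a := lt_trans hε0 hc
        have hcount := good_count (istar := istar) hsu hT2 hKT hω a hΔpos
        rw [← hLdef] at hcount
        have hNeq : ((((Finset.Icc (K+1) T).filter
            (fun t => ξ t ω = Fin.last K ∧ b t ω = a)).card : ℕ) : ℝ) = ((N a ω : ℕ) : ℝ) := rfl
        rw [hNeq] at hcount
        have hle : (μ istar - μ a) * (N a ω : ℝ) ≤ 16*L/ε := by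
          rw [le_div_iff₀ hε0]
          nlinarith [hcount, hN0, hΔpos, hc]
        nlinarith [mul_nonneg hε0.le hN0]
    calc ∑ a : Fin K, (μ istar - μ a) * (N a ω : ℝ)
        ≤ ∑ a : Fin K, (ε * (N a ω : ℝ) + 16*L/ε) := Finset.sum_le_sum fun a _ => hpera a
      _ = ε * (∑ a : Fin K, (N a ω : ℝ)) + (K:ℝ) * (16*L/ε) := by
          rw [Finset.sum_add_distrib, ← Finset.mul_sum, Finset.sum_const,
            Finset.card_univ, Fintype.card_fin, nsmul_eq_mul]
      _ ≤ ε * T + 16*(K:ℝ)*L/ε := by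
          have h1 := hNsum ω
          have h2 : (K:ℝ) * (16*L/ε) = 16*(K:ℝ)*L/ε := by ring
          nlinarith [hε0]
  have hgood_bound : (∫ ω in goodEvent K T X μ, G ω ∂P) ≤ ε * T + 16*(K:ℝ)*L/ε := by
    have hconst0 : 0 ≤ ε * T + 16*(K:ℝ)*L/ε := by positivity
    have hnorm := norm_setIntegral_le_of_norm_le_const (μ := P)
      (s := goodEvent K T X μ) (C := ε * T + 16*(K:ℝ)*L/ε)
      (measure_lt_top P _)
      (fun ω hω => by
        rw [Real.norm_eq_abs, abs_of_nonneg (hG0 ω)]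
        exact hgoodpt ω hω)
    calc (∫ ω in goodEvent K T X μ, G ω ∂P) ≤ ‖∫ ω in goodEvent K T X μ, G ω ∂P‖ :=
        le_abs_self _
      _ ≤ (ε * T + 16*(K:ℝ)*L/ε) * (P (goodEvent K T X μ)).toReal := hnorm
      _ ≤ (ε * T + 16*(K:ℝ)*L/ε) * 1 := by
          refine mul_le_mul_of_nonneg_left ?_ hconst0
          exact ENNReal.toReal_le_of_le_ofReal (by norm_num) (by
            rw [ENNReal.ofReal_one]; exact prob_le_one)
      _ = ε * T + 16*(K:ℝ)*L/ε := by ring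
  -- bad part
  have hbadP := bad_prob (P := P) (ξ := ξ) hXm hbd hid hμ01 hsu.2.2.2.2.2.2.2 hT2
  have hbad_bound : (∫ ω in (goodEvent K T X μ)ᶜ, G ω ∂P) ≤ 4*(K:ℝ)*L := by
    have hexp3 : Real.exp (-3 * L) = ((T:ℝ)^3)⁻¹ := by
      rw [show (-3 : ℝ) * L = -((3:ℕ) * L) by push_cast; ring, Real.exp_neg,
        Real.exp_nat_mul, Real.exp_log hT0R]
    have htoReal : (P (goodEvent K T X μ (Ω := Ω))ᶜ).toReal
        ≤ 2*(K:ℝ)*T * Real.exp (-3 * L) := by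
      have hne : ((2 : ENNReal) * (K : ENNReal) * (T : ENNReal))
          * ENNReal.ofReal (Real.exp (-3 * Real.log T)) ≠ ⊤ :=
        ENNReal.mul_ne_top (by finiteness) ENNReal.ofReal_ne_top
      have h := ENNReal.toReal_mono hne hbadP
      rw [ENNReal.toReal_mul, ENNReal.toReal_mul,
        ENNReal.toReal_ofReal (le_of_lt (Real.exp_pos _))] at h
      simpa using h
    have hnorm := norm_setIntegral_le_of_norm_le_const (μ := P)
      (s := (goodEvent K T X μ)ᶜ) (C := (T:ℝ))
      (measure_lt_top P _)
      (fun ω hω => by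
        rw [Real.norm_eq_abs, abs_of_nonneg (hG0 ω)]
        exact hGleT ω)
    have hKlarge : (2:ℝ) ≤ K := by exact_mod_cast hK
    have hLhalf : (1:ℝ)/2 ≤ L := by
      have hlog2 : Real.log 2 ≤ L := Real.log_le_log (by norm_num) (by exact_mod_cast hT2)
      have := Real.log_two_gt_d9
      linarith
    calc (∫ ω in (goodEvent K T X μ)ᶜ, G ω ∂P)
        ≤ ‖∫ ω in (goodEvent K T X μ)ᶜ, G ω ∂P‖ := le_abs_self _
      _ ≤ (T:ℝ) * (P (goodEvent K T X μ (Ω := Ω))ᶜ).toReal := hnorm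
      _ ≤ (T:ℝ) * (2*(K:ℝ)*T * Real.exp (-3 * L)) := by
          refine mul_le_mul_of_nonneg_left htoReal (by positivity)
      _ = 2*(K:ℝ)/T := by rw [hexp3]; field_simp
      _ ≤ (K:ℝ) := by
          rw [div_le_iff₀ hT0R]
          have : (2:ℝ) ≤ T := by exact_mod_cast hT2
          nlinarith [hK0]
      _ ≤ 4*(K:ℝ)*L := by nlinarith [hK0, hLhalf]
  -- put it together
  have hεT : ε * T = Real.sqrt (16*(K:ℝ)*L*T) := by
    rw [hεdef, sqrt_div_mul (by positivity) (by omega)]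
    congr 1
    ring
  have hε2 : ε^2 = 16*(K:ℝ)*L/T := Real.sq_sqrt (by positivity)
  have h16ε : 16*(K:ℝ)*L/ε = ε * T := by
    have h1 : 16*(K:ℝ)*L = ε^2 * T := by
      rw [hε2]; field_simp
    rw [h1]
    field_simp
  have hsqrt16 : Real.sqrt (16*(K:ℝ)*L*T) = 4 * Real.sqrt ((T:ℝ)*K*L) := by
    rw [show 16*(K:ℝ)*L*T = 4^2 * ((T:ℝ)*K*L) by ring, Real.sqrt_mul (by positivity),
      Real.sqrt_sq (by norm_num)]
  have hfinal : (∫ ω, (∑ t ∈ Finset.Icc (K + 1) T,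
      (∑ i, pstar v istar i * μ i - ∑ i, pt v b t ω i * μ i)) ∂P) = ∫ ω, G ω ∂P := by
    rw [hstep1, integral_finset_sum _ (fun t _ => hFt_int t),
      Finset.sum_congr rfl ht_eval, hstep4]
  rw [hfinal, hsplit]
  have hbig : ε * T + 16*(K:ℝ)*L/ε + 4*(K:ℝ)*L
      ≤ 100 * (Real.sqrt ((T:ℝ)*K*L) + (K:ℝ)*L) := by
    rw [h16ε, hεT, hsqrt16]
    have hs0 : 0 ≤ Real.sqrt ((T:ℝ)*K*L) := Real.sqrt_nonneg _
    nlinarith [hK0, hL0]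
  calc (∫ ω in goodEvent K T X μ, G ω ∂P) + ∫ ω in (goodEvent K T X μ)ᶜ, G ω ∂P
      ≤ (ε * T + 16*(K:ℝ)*L/ε) + 4*(K:ℝ)*L := add_le_add hgood_bound hbad_bound
    _ ≤ 100 * (Real.sqrt ((T:ℝ)*K*L) + (K:ℝ)*L) := hbig
end

section
/- Let T ≥ 2 be an integer, let X_1, X_2, … be i.i.d. random variables taking values in [0,1] with mean μ on a probability space, and let N be any random variable on the same space (with arbitrary dependence on the X_j) taking values in the integer interval {k_s, …, k_e}, where 1 ≤ k_s ≤ k_e are integers. Then P( (1/N)·Σ_{j=1}^{N} X_j − μ ≥ 2·√(ln T / N) ) ≤ (k_e − k_s + 1)/T². -/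
open MeasureTheory ProbabilityTheory


lemma exp_le_one_add_add_sq {u : ℝ} (hu : |u| ≤ 1) : Real.exp u ≤ 1 + u + u ^ 2 := by
  have h := Real.exp_bound hu (n := 2) (by norm_num)
  simp [Finset.sum_range_succ] at h
  have h' := abs_le.mp h
  nlinarith [sq_abs u, sq_nonneg u, h'.2]

lemma integrable_of_bdd {Ω : Type} [MeasurableSpace Ω] {P : Measure Ω} [IsFiniteMeasure P]
    {f : Ω → ℝ} (hf : Measurable f) (C : ℝ) (h : ∀ ω, |f ω| ≤ C) : Integrable f P :=
  (integrable_const C).mono' hf.aestronglyMeasurable (ae_of_all _ fun ω => by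
    simpa [Real.norm_eq_abs] using h ω)

lemma mgf_bound {Ω : Type} [MeasurableSpace Ω] {P : Measure Ω} [IsProbabilityMeasure P]
    {Y : Ω → ℝ} {μ t : ℝ} (hmeas : Measurable Y) (hrange : ∀ ω, Y ω ∈ Set.Icc (0:ℝ) 1)
    (hmean : ∫ ω, Y ω ∂P = μ) (ht0 : 0 ≤ t) (ht1 : t ≤ 1) :
    mgf Y P t ≤ Real.exp (t * μ + t ^ 2 / 4) := by
  have hμ0 : 0 ≤ μ := hmean ▸ integral_nonneg fun ω => (hrange ω).1
  have hYint : Integrable Y P := integrable_of_bdd hmeas 1 fun ω => by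
    have := hrange ω; rw [abs_le]; constructor <;> [linarith [this.1]; exact this.2]
  have hμ1 : μ ≤ 1 := by
    rw [← hmean]
    calc ∫ ω, Y ω ∂P ≤ ∫ _ω, (1:ℝ) ∂P := integral_mono hYint (integrable_const 1)
          fun ω => (hrange ω).2
      _ = 1 := by simp
  -- variance bound
  have hsqint : Integrable (fun ω => (Y ω - μ) ^ 2) P := integrable_of_bdd
    (by fun_prop) 1 fun ω => by
      have h1 := (hrange ω).1; have h2 := (hrange ω).2
      rw [abs_le]; constructor <;> nlinarith
  have hY2int : Integrable (fun ω => Y ω ^ 2) P := integrable_of_bdd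
    (by fun_prop) 1 fun ω => by
      have h1 := (hrange ω).1; have h2 := (hrange ω).2
      rw [abs_le]; constructor <;> nlinarith
  have hdevint : Integrable (fun ω => Y ω - μ) P := hYint.sub (integrable_const μ)
  have hdevmean : ∫ ω, (Y ω - μ) ∂P = 0 := by
    rw [integral_sub hYint (integrable_const μ), hmean]; simp
  have hVar : ∫ ω, (Y ω - μ) ^ 2 ∂P ≤ 1 / 4 := by
    have hexp : (fun ω => (Y ω - μ) ^ 2) = fun ω => Y ω ^ 2 - (2 * μ) * Y ω + μ ^ 2 := by
      ext ω; ring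
    have hA : Integrable (fun ω => Y ω ^ 2 - 2 * μ * Y ω) P := by
      exact hY2int.sub (hYint.const_mul _)
    rw [hexp, integral_add hA (integrable_const _),
      integral_sub hY2int (by exact hYint.const_mul _), integral_const_mul, hmean]
    have hY2 : ∫ ω, Y ω ^ 2 ∂P ≤ μ := by
      rw [← hmean]
      refine integral_mono hY2int hYint fun ω => ?_
      have h1 := (hrange ω).1; have h2 := (hrange ω).2; nlinarith
    simp only [integral_const, measure_univ, ENNReal.toReal_one, probReal_univ, smul_eq_mul, one_mul]
    nlinarith [sq_nonneg (μ - 1/2)]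
  -- pointwise bound
  have hpt : ∀ ω, Real.exp (t * Y ω) ≤
      Real.exp (t * μ) * (1 + t * (Y ω - μ) + t ^ 2 * (Y ω - μ) ^ 2) := by
    intro ω
    have h1 := (hrange ω).1; have h2 := (hrange ω).2
    have habs : |t * (Y ω - μ)| ≤ 1 := by
      rw [abs_mul, abs_of_nonneg ht0]
      have : |Y ω - μ| ≤ 1 := by rw [abs_le]; constructor <;> nlinarith
      nlinarith [abs_nonneg (Y ω - μ)]
    have := exp_le_one_add_add_sq habs
    calc Real.exp (t * Y ω) = Real.exp (t * μ) * Real.exp (t * (Y ω - μ)) := by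
          rw [← Real.exp_add]; ring_nf
      _ ≤ Real.exp (t * μ) * (1 + t * (Y ω - μ) + (t * (Y ω - μ)) ^ 2) := by
          have := Real.exp_pos (t * μ); nlinarith
      _ = Real.exp (t * μ) * (1 + t * (Y ω - μ) + t ^ 2 * (Y ω - μ) ^ 2) := by ring
  have hexpint : Integrable (fun ω => Real.exp (t * Y ω)) P := integrable_of_bdd
    (by fun_prop) (Real.exp 1) fun ω => by
      rw [abs_of_nonneg (Real.exp_nonneg _)]
      apply Real.exp_le_exp.mpr
      have h1 := (hrange ω).1; have h2 := (hrange ω).2; nlinarith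
  have hrhsint : Integrable
      (fun ω => Real.exp (t * μ) * (1 + t * (Y ω - μ) + t ^ 2 * (Y ω - μ) ^ 2)) P := by
    apply Integrable.const_mul
    exact ((integrable_const 1).add (hdevint.const_mul t)).add (hsqint.const_mul _)
  calc mgf Y P t = ∫ ω, Real.exp (t * Y ω) ∂P := rfl
    _ ≤ ∫ ω, Real.exp (t * μ) * (1 + t * (Y ω - μ) + t ^ 2 * (Y ω - μ) ^ 2) ∂P :=
        integral_mono hexpint hrhsint hpt
    _ = Real.exp (t * μ) * (1 + t * 0 + t ^ 2 * ∫ ω, (Y ω - μ) ^ 2 ∂P) := by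
        have i1 : Integrable (fun ω => 1 + t * (Y ω - μ)) P := by
          exact (integrable_const 1).add (hdevint.const_mul t)
        rw [integral_const_mul, integral_add i1 (by exact hsqint.const_mul (t ^ 2)),
          integral_add (integrable_const 1) (by exact hdevint.const_mul t),
          integral_const_mul, integral_const_mul, hdevmean]
        simp
    _ ≤ Real.exp (t * μ) * (1 + t ^ 2 / 4) := by
        have := sq_nonneg t
        have h4 : t ^ 2 * ∫ ω, (Y ω - μ) ^ 2 ∂P ≤ t ^ 2 / 4 := by nlinarith
        nlinarith [Real.exp_pos (t * μ)]
    _ ≤ Real.exp (t * μ) * Real.exp (t ^ 2 / 4) := by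
        have := Real.add_one_le_exp (t ^ 2 / 4)
        nlinarith [Real.exp_pos (t * μ)]
    _ = Real.exp (t * μ + t ^ 2 / 4) := (Real.exp_add _ _).symm

lemma per_n_bound {Ω : Type} [MeasurableSpace Ω] (P : Measure Ω) [IsProbabilityMeasure P]
    (T : ℕ) (X : ℕ → Ω → ℝ) (μ : ℝ) (hT : 2 ≤ T)
    (hXmeas : ∀ j, Measurable (X j))
    (hXrange : ∀ j ω, X j ω ∈ Set.Icc (0 : ℝ) 1)
    (hXindep : iIndepFun X P)
    (hXmean : ∀ j, ∫ ω, X j ω ∂P = μ) (n : ℕ) (hn : 1 ≤ n) :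
    P {ω | (n : ℝ) * μ + 2 * Real.sqrt (n * Real.log T) ≤ ∑ j ∈ Finset.range n, X j ω} ≤
      ENNReal.ofReal (1 / (T : ℝ) ^ 2) := by
  set L := Real.log T with hLdef
  have hT0 : (0 : ℝ) < T := by positivity
  have hT1 : (1 : ℝ) ≤ T := by exact_mod_cast Nat.one_le_of_lt hT
  have hL : 0 ≤ L := Real.log_nonneg hT1
  have hn0 : (0 : ℝ) < n := by exact_mod_cast hn
  have hμ0 : 0 ≤ μ := (hXmean 0) ▸ integral_nonneg fun ω => (hXrange 0 ω).1
  by_cases hcase : 4 * L ≤ (n : ℝ)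
  · -- Chernoff case
    set t : ℝ := 2 * Real.sqrt (L / n) with htdef
    have ht0 : 0 ≤ t := by positivity
    have ht2 : t ^ 2 = 4 * (L / n) := by
      rw [htdef, mul_pow, Real.sq_sqrt (by positivity)]; ring
    have ht1 : t ≤ 1 := by
      have h1 : t ^ 2 ≤ 1 := by
        rw [ht2]
        rw [show (4 : ℝ) * (L / n) = 4 * L / n by ring, div_le_one hn0]
        exact hcase
      nlinarith
    have hje : ∀ j, Integrable (fun ω => Real.exp (t * X j ω)) P := fun j =>
      integrable_of_bdd (by fun_prop) (Real.exp 1) fun ω => by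
        rw [abs_of_nonneg (Real.exp_nonneg _)]
        apply Real.exp_le_exp.mpr
        have h1 := (hXrange j ω).1; have h2 := (hXrange j ω).2; nlinarith
    have hSint : Integrable (fun ω => Real.exp (t * (∑ j ∈ Finset.range n, X j) ω)) P :=
      hXindep.integrable_exp_mul_sum hXmeas fun j _ => hje j
    have hchern := measure_ge_le_exp_mul_mgf (μ := P) (X := ∑ j ∈ Finset.range n, X j)
      (t := t) ((n : ℝ) * μ + 2 * Real.sqrt (n * L)) ht0 hSint
    have hmgf : mgf (∑ j ∈ Finset.range n, X j) P t ≤ Real.exp ((n:ℝ) * (t * μ + t ^ 2 / 4)) := by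
      rw [hXindep.mgf_sum hXmeas]
      calc ∏ j ∈ Finset.range n, mgf (X j) P t
          ≤ ∏ _j ∈ Finset.range n, Real.exp (t * μ + t ^ 2 / 4) :=
            Finset.prod_le_prod (fun j _ => mgf_nonneg) fun j _ =>
              mgf_bound (hXmeas j) (hXrange j) (hXmean j) ht0 ht1
        _ = Real.exp ((n:ℝ) * (t * μ + t ^ 2 / 4)) := by
            rw [Finset.prod_const, Finset.card_range, Real.exp_nat_mul]
    -- arithmetic of the exponent
    have hts : t * Real.sqrt ((n:ℝ) * L) = 2 * L := by
      rw [htdef, mul_assoc, ← Real.sqrt_mul (by positivity)]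
      rw [show L / n * (n * L) = L ^ 2 by field_simp]
      rw [Real.sqrt_sq hL]
    have hnt : (n : ℝ) * t ^ 2 = 4 * L := by rw [ht2]; field_simp
    have hexp_eq : -t * ((n : ℝ) * μ + 2 * Real.sqrt (n * L)) + (n:ℝ) * (t * μ + t ^ 2 / 4)
        = -3 * L := by linear_combination (-2 : ℝ) * hts + (1/4 : ℝ) * hnt
    have hfinal : (P {ω | (n : ℝ) * μ + 2 * Real.sqrt (n * L) ≤
        (∑ j ∈ Finset.range n, X j) ω}).toReal ≤ 1 / (T : ℝ) ^ 2 := by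
      calc (P _).toReal ≤ Real.exp (-t * ((n : ℝ) * μ + 2 * Real.sqrt (n * L))) *
            mgf (∑ j ∈ Finset.range n, X j) P t := hchern
        _ ≤ Real.exp (-t * ((n : ℝ) * μ + 2 * Real.sqrt (n * L))) *
            Real.exp ((n:ℝ) * (t * μ + t ^ 2 / 4)) := by
            exact mul_le_mul_of_nonneg_left hmgf (Real.exp_nonneg _)
        _ = Real.exp (-3 * L) := by rw [← Real.exp_add, hexp_eq]
        _ ≤ Real.exp (-2 * L) := Real.exp_le_exp.mpr (by linarith)
        _ = 1 / (T : ℝ) ^ 2 := by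
            rw [show (-2 : ℝ) * L = -(L + L) by ring, Real.exp_neg, Real.exp_add,
              hLdef, Real.exp_log hT0]
            rw [one_div, sq]
    have hseteq : {ω | (n : ℝ) * μ + 2 * Real.sqrt (n * L) ≤ ∑ j ∈ Finset.range n, X j ω}
        = {ω | (n : ℝ) * μ + 2 * Real.sqrt (n * L) ≤ (∑ j ∈ Finset.range n, X j) ω} := by
      simp [Finset.sum_apply]
    rw [hseteq]
    calc P _ = ENNReal.ofReal ((P _).toReal) := (ENNReal.ofReal_toReal (measure_ne_top _ _)).symm
      _ ≤ ENNReal.ofReal (1 / (T : ℝ) ^ 2) := ENNReal.ofReal_le_ofReal hfinal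
  · -- empty case
    push_neg at hcase
    have hempty : {ω | (n : ℝ) * μ + 2 * Real.sqrt (n * L) ≤ ∑ j ∈ Finset.range n, X j ω}
        = ∅ := by
      ext ω
      simp only [Set.mem_setOf_eq, Set.mem_empty_iff_false, iff_false, not_le]
      have hS : ∑ j ∈ Finset.range n, X j ω ≤ (n : ℝ) := by
        calc ∑ j ∈ Finset.range n, X j ω ≤ ∑ _j ∈ Finset.range n, (1:ℝ) :=
              Finset.sum_le_sum fun j _ => (hXrange j ω).2
          _ = n := by simp
      have hsqrt : (n : ℝ) / 2 < Real.sqrt ((n:ℝ) * L) := by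
        rw [Real.lt_sqrt (by positivity)]
        nlinarith
      nlinarith
    rw [hempty]
    simp


/-- Let `T ≥ 2`, let `X 0, X 1, …` be i.i.d. `[0,1]`-valued
random variables with mean `μ` (the sample `X j` being the `(j+1)`-st sample),
and let `N` be any random variable taking values in the integer interval
`{ks, …, ke}` with `1 ≤ ks ≤ ke` (with arbitrary dependence on the `X j`).
Then `P( (1/N)·∑_{j=1}^{N} X_j - μ ≥ 2·√(ln T / N) ) ≤ (ke - ks + 1)/T²`. -/
theorem random_index_hoeffding_upper (Ω : Type) [MeasurableSpace Ω]
    (P : Measure Ω) [IsProbabilityMeasure P] (T : ℕ) (X : ℕ → Ω → ℝ) (μ : ℝ)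
    (N : Ω → ℕ) (ks ke : ℕ)
    (hT : 2 ≤ T)
    (hXmeas : ∀ j, Measurable (X j))
    (hXrange : ∀ j ω, X j ω ∈ Set.Icc (0 : ℝ) 1)
    (hXindep : iIndepFun X P)
    (hXident : ∀ j, Measure.map (X j) P = Measure.map (X 0) P)
    (hXmean : ∀ j, ∫ ω, X j ω ∂P = μ)
    (hNmeas : Measurable N)
    (hks : 1 ≤ ks) (hke : ks ≤ ke)
    (hNrange : ∀ ω, N ω ∈ Set.Icc ks ke) :
    P {ω | (∑ j ∈ Finset.range (N ω), X j ω) / (N ω) - μ ≥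
        2 * Real.sqrt (Real.log T / (N ω))} ≤
      ENNReal.ofReal (((ke : ℝ) - (ks : ℝ) + 1) / (T : ℝ) ^ 2) := by
  set L := Real.log T with hLdef
  set A : ℕ → Set Ω := fun n =>
    {ω | (n : ℝ) * μ + 2 * Real.sqrt (n * L) ≤ ∑ j ∈ Finset.range n, X j ω} with hAdef
  have hsub : {ω | (∑ j ∈ Finset.range (N ω), X j ω) / (N ω) - μ ≥
      2 * Real.sqrt (L / (N ω))} ⊆ ⋃ n ∈ Finset.Icc ks ke, A n := by
    intro ω hω
    simp only [Set.mem_setOf_eq, ge_iff_le] at hω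
    have hmem : N ω ∈ Finset.Icc ks ke :=
      Finset.mem_Icc.mpr ⟨(hNrange ω).1, (hNrange ω).2⟩
    refine Set.mem_biUnion hmem ?_
    have hn1 : 1 ≤ N ω := le_trans hks (hNrange ω).1
    have hn0 : (0 : ℝ) < (N ω : ℝ) := by exact_mod_cast hn1
    show ((N ω : ℝ)) * μ + 2 * Real.sqrt ((N ω : ℝ) * L) ≤ ∑ j ∈ Finset.range (N ω), X j ω
    have key : (N ω : ℝ) * Real.sqrt (L / (N ω)) = Real.sqrt ((N ω : ℝ) * L) := by
      rw [show (N ω : ℝ) * L = (N ω : ℝ) ^ 2 * (L / (N ω)) by field_simp,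
        Real.sqrt_mul (sq_nonneg _), Real.sqrt_sq hn0.le]
    have h2 : (μ + 2 * Real.sqrt (L / (N ω))) * (N ω : ℝ) ≤
        ∑ j ∈ Finset.range (N ω), X j ω :=
      (le_div_iff₀ hn0).mp (by linarith)
    calc (N ω : ℝ) * μ + 2 * Real.sqrt ((N ω : ℝ) * L)
        = (μ + 2 * Real.sqrt (L / (N ω))) * (N ω : ℝ) := by rw [← key]; ring
      _ ≤ ∑ j ∈ Finset.range (N ω), X j ω := h2
  calc P {ω | (∑ j ∈ Finset.range (N ω), X j ω) / (N ω) - μ ≥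
          2 * Real.sqrt (L / (N ω))}
      ≤ P (⋃ n ∈ Finset.Icc ks ke, A n) := measure_mono hsub
    _ ≤ ∑ n ∈ Finset.Icc ks ke, P (A n) := measure_biUnion_finset_le _ _
    _ ≤ ∑ _n ∈ Finset.Icc ks ke, ENNReal.ofReal (1 / (T : ℝ) ^ 2) :=
        Finset.sum_le_sum fun n hn =>
          per_n_bound P T X μ hT hXmeas hXrange hXindep hXmean n
            (le_trans hks (Finset.mem_Icc.mp hn).1)
    _ = ENNReal.ofReal (((ke : ℝ) - (ks : ℝ) + 1) / (T : ℝ) ^ 2) := by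
        rw [Finset.sum_const, Nat.card_Icc, nsmul_eq_mul, ← ENNReal.ofReal_natCast,
          ← ENNReal.ofReal_mul (by positivity)]
        congr 1
        have hle : ks ≤ ke + 1 := by omega
        rw [Nat.cast_sub hle]
        push_cast
        ring
end
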